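/- arXiv:2008.10558 — 7 statements merged into one kernel-verified Lean document; each statement's English description precedes it below -/
import Mathlib

section
/- Let F be a non-vanishing entire function on ℂ such that there exist constants A, B > 0 and m ∈ ℕ with |F(z)| ≤ A·e^{B·r^m} for all z with |z| < r and all r > 0. Then there exists a polynomial p with deg(p) ≤ m such that F(z) = e^{p(z)} for all z ∈ ℂ. -/
open Metric Set Nat Polynomial

/-- Polynomial Liouville: entire with polynomial growth is a polynomial. -/
lemma poly_liouville : ∀ (m : ℕ) (g : ℂ → ℂ), Differentiable ℂ g → ∀ C : ℝ,
    (∀ z, ‖g z‖ ≤ C * (1 + ‖z‖) ^ m) →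
    ∃ p : Polynomial ℂ, p.degree ≤ (m : ℕ) ∧ ∀ z, g z = p.eval z := by
  intro m
  induction m with
  | zero =>
    intro g hg C hb
    refine ⟨Polynomial.C (g 0), le_trans degree_C_le (by exact_mod_cast Nat.zero_le 0), fun z => ?_⟩
    rw [eval_C]
    refine hg.apply_eq_apply_of_bounded ?_ z 0
    rw [isBounded_iff_forall_norm_le]
    refine ⟨C, ?_⟩
    rintro x ⟨z, rfl⟩
    simpa using hb z
  | succ m ih =>
    intro g hg C hb
    have hC : 0 ≤ C := le_trans (norm_nonneg (g 0)) (by simpa using hb 0)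
    set h : ℂ → ℂ := dslope g 0 with hh
    have hhd : Differentiable ℂ h := by
      have := (Complex.differentiableOn_dslope (c := (0:ℂ)) (s := univ) Filter.univ_mem).mpr
        hg.differentiableOn
      rw [← differentiableOn_univ]
      exact this
    obtain ⟨D, hD⟩ := (isCompact_closedBall (0:ℂ) 1).exists_bound_of_continuousOn
      hhd.continuous.continuousOn
    have key : ∀ z : ℂ, ‖h z‖ ≤ (max D 0 + 3 * C) * (1 + ‖z‖) ^ m := by
      intro z
      have h1 : (1:ℝ) ≤ (1 + ‖z‖) ^ m := one_le_pow₀ (by linarith [norm_nonneg z])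
      have hK : (0:ℝ) ≤ max D 0 + 3 * C := by
        have := le_max_right D 0; linarith
      rcases le_or_gt ‖z‖ 1 with hz | hz
      · have h2 := hD z (by simpa using hz)
        have h3 : D ≤ max D 0 + 3 * C := by
          have := le_max_left D 0; linarith
        calc ‖h z‖ ≤ max D 0 + 3 * C := le_trans h2 h3
          _ = (max D 0 + 3 * C) * 1 := by ring
          _ ≤ (max D 0 + 3 * C) * (1 + ‖z‖) ^ m := mul_le_mul_of_nonneg_left h1 hK
      · have hz0 : z ≠ 0 := by
          intro h0; rw [h0] at hz; norm_num at hz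
        have hzpos : (0:ℝ) < ‖z‖ := lt_trans one_pos hz
        have hval : h z = (g z - g 0) / z := by
          rw [hh, dslope_of_ne _ hz0, slope_def_field]
          simp [div_eq_iff (sub_ne_zero.mpr hz0)]
        have hg0 : ‖g 0‖ ≤ C := by simpa using hb 0
        have hgz : ‖g z‖ ≤ C * (1 + ‖z‖) ^ (m + 1) := hb z
        have hbnd : ‖h z‖ ≤ (C * (1 + ‖z‖) ^ (m+1) + C) / ‖z‖ := by
          rw [hval, norm_div]
          gcongr
          exact le_trans (norm_sub_le _ _) (by linarith)
        refine hbnd.trans ?_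
        rw [div_le_iff₀ hzpos]
        have hpow : (1 + ‖z‖) ^ (m+1) = (1 + ‖z‖) * (1 + ‖z‖) ^ m := by ring
        have h2 : 1 + ‖z‖ ≤ 2 * ‖z‖ := by linarith
        have hm : (0:ℝ) ≤ (1 + ‖z‖) ^ m := by positivity
        have e1 : C * (1 + ‖z‖) ^ (m+1) ≤ C * ((2*‖z‖) * (1+‖z‖)^m) := by
          rw [hpow]; exact mul_le_mul_of_nonneg_left (mul_le_mul_of_nonneg_right h2 hm) hC
        have e0 : (1:ℝ) ≤ (1+‖z‖)^m * ‖z‖ := by nlinarith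
        have e2 : C ≤ C * ((1+‖z‖)^m * ‖z‖) := by nlinarith
        calc C * (1 + ‖z‖) ^ (m+1) + C
            ≤ C * ((2*‖z‖) * (1+‖z‖)^m) + C * ((1+‖z‖)^m * ‖z‖) := by linarith
          _ = (3 * C) * (1+‖z‖)^m * ‖z‖ := by ring
          _ ≤ (max D 0 + 3 * C) * (1+‖z‖)^m * ‖z‖ := by
              have h3 : 3 * C ≤ max D 0 + 3 * C := by
                have := le_max_right D 0; linarith
              exact mul_le_mul_of_nonneg_right
                (mul_le_mul_of_nonneg_right h3 hm) hzpos.le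
    obtain ⟨q, hq, hq'⟩ := ih h hhd _ key
    refine ⟨Polynomial.C (g 0) + Polynomial.X * q, ?_, fun z => ?_⟩
    · refine le_trans (degree_add_le _ _) (max_le ?_ ?_)
      · exact le_trans degree_C_le (by exact_mod_cast Nat.zero_le (m+1))
      · refine le_trans (degree_mul_le _ _) ?_
        have hcast : ((1:ℕ) : WithBot ℕ) + (m : WithBot ℕ) ≤ ((m+1 : ℕ) : WithBot ℕ) := by
          rw [← Nat.cast_add]; exact_mod_cast by omega
        exact le_trans (add_le_add degree_X_le hq) (by simpa using hcast)
    · have hrel := sub_smul_dslope g 0 z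
      simp only [sub_zero, smul_eq_mul, ← hh] at hrel
      rw [eval_add, eval_C, eval_mul, eval_X, ← hq']
      linear_combination -hrel

lemma exists_primitive (h : ℂ → ℂ) (hd : Differentiable ℂ h) :
    ∃ G : ℂ → ℂ, ∀ z, HasDerivAt G (h z) z := by
  set a : ℕ → ℂ := fun n => (n ! : ℂ)⁻¹ * iteratedDeriv n h 0 with ha
  have hsum : ∀ z : ℂ, HasSum (fun n => a n * z ^ n) (h z) := by
    intro z
    have h1 := Complex.hasSum_taylorSeries_of_entire hd 0 z
    have h2 : (fun n : ℕ => a n * z ^ n)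
        = fun n : ℕ => (n ! : ℂ)⁻¹ • (z - 0) ^ n • iteratedDeriv n h 0 := by
      funext n; simp only [ha, smul_eq_mul, sub_zero]; ring
    rw [h2]; exact h1
  refine ⟨fun z => ∑' n, a n / ((n:ℂ)+1) * z ^ (n+1), fun y => ?_⟩
  set R : ℝ := ‖y‖ + 1 with hRdef
  have hR : 0 < R := by positivity
  have hs2 : Summable (fun n => ‖a n * ((2*R : ℝ) : ℂ)^n‖) :=
    summable_norm_iff.mpr (hsum _).summable
  have hu : Summable (fun n => ‖a n‖ * R ^ n) := by
    refine hs2.of_nonneg_of_le (fun n => by positivity) (fun n => ?_)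
    have hrhs : ‖a n * ((2*R : ℝ) : ℂ)^n‖ = ‖a n‖ * (2*R)^n := by
      rw [norm_mul, norm_pow, Complex.norm_real, Real.norm_eq_abs, abs_of_pos (by linarith : (0:ℝ) < 2*R)]
    rw [hrhs]
    exact mul_le_mul_of_nonneg_left
      (pow_le_pow_left₀ hR.le (by linarith) n) (norm_nonneg _)
  have hg : ∀ (n : ℕ) (z : ℂ), HasDerivAt (fun w => a n / ((n:ℂ)+1) * w ^ (n+1))
      (a n * z ^ n) z := by
    intro n z
    have hne : ((n:ℂ)+1) ≠ 0 := Nat.cast_add_one_ne_zero n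
    have := (hasDerivAt_pow (n+1) z).const_mul (a n / ((n:ℂ)+1))
    refine this.congr_deriv ?_
    push_cast
    field_simp
  have hg' : ∀ (n : ℕ) (z : ℂ), z ∈ ball (0:ℂ) R → ‖a n * z ^ n‖ ≤ ‖a n‖ * R ^ n := by
    intro n z hz
    have hzR : ‖z‖ ≤ R := le_of_lt (by simpa using hz)
    calc ‖a n * z ^ n‖ = ‖a n‖ * ‖z‖ ^ n := by rw [norm_mul, norm_pow]
      _ ≤ ‖a n‖ * R ^ n :=
        mul_le_mul_of_nonneg_left (pow_le_pow_left₀ (norm_nonneg z) hzR n) (norm_nonneg _)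
  have h0 : (0:ℂ) ∈ ball (0:ℂ) R := mem_ball_self hR
  have hy : y ∈ ball (0:ℂ) R := by simp [hRdef]
  have hg0 : Summable (fun n => a n / ((n:ℂ)+1) * (0:ℂ) ^ (n+1)) :=
    summable_zero.congr (fun n => by simp)
  have := hasDerivAt_tsum_of_isPreconnected hu isOpen_ball (convex_ball _ _).isPreconnected
    (fun n z _ => hg n z) (fun n z hz => hg' n z hz) h0 hg0 hy
  rw [(hsum y).tsum_eq] at this
  exact this

lemma exists_exp_rep (F : ℂ → ℂ) (hF : Differentiable ℂ F) (hnz : ∀ z, F z ≠ 0) :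
    ∃ g : ℂ → ℂ, Differentiable ℂ g ∧ ∀ z, F z = Complex.exp (g z) := by
  have hderiv : Differentiable ℂ (deriv F) := by
    rw [← differentiableOn_univ]
    exact ((hF.differentiableOn.analyticOnNhd isOpen_univ).deriv).differentiableOn
  set h : ℂ → ℂ := fun z => deriv F z / F z with hh
  have hd : Differentiable ℂ h := hderiv.div hF hnz
  obtain ⟨G, hG⟩ := exists_primitive h hd
  have hGdiff : Differentiable ℂ G := fun z => (hG z).differentiableAt
  set Phi : ℂ → ℂ := fun w => F w * Complex.exp (-G w) with hPhi
  have hPhid : ∀ z, HasDerivAt Phi 0 z := by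
    intro z
    have h1 := (hF z).hasDerivAt
    have h2 := ((hG z).neg).cexp
    have h3 := h1.mul h2
    refine h3.congr_deriv ?_
    have hz := hnz z
    simp only [hh]
    field_simp
    ring
  have hconst : ∀ z, Phi z = Phi 0 := by
    intro z
    exact is_const_of_deriv_eq_zero (fun w => (hPhid w).differentiableAt)
      (fun w => (hPhid w).deriv) z 0
  refine ⟨fun z => Complex.log (F 0) - G 0 + G z, by fun_prop, fun z => ?_⟩
  have h0 := hconst z
  rw [hPhi] at h0
  beta_reduce at h0
  have : F z = F 0 * Complex.exp (-G 0) * Complex.exp (G z) := by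
    have e : Complex.exp (-G z) * Complex.exp (G z) = 1 := by
      rw [← Complex.exp_add]; simp
    calc F z = F z * (Complex.exp (-G z) * Complex.exp (G z)) := by rw [e, mul_one]
      _ = (F z * Complex.exp (-G z)) * Complex.exp (G z) := by ring
      _ = F 0 * Complex.exp (-G 0) * Complex.exp (G z) := by rw [h0]
  rw [this]
  show F 0 * Complex.exp (-G 0) * Complex.exp (G z)
      = Complex.exp (Complex.log (F 0) - G 0 + G z)
  rw [show Complex.log (F 0) - G 0 + G z = Complex.log (F 0) + (-G 0 + G z) by ring,
    Complex.exp_add, Complex.exp_add, Complex.exp_log (hnz 0), mul_assoc]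

/-- Borel–Carathéodory bound. -/
lemma borel_caratheodory (f : ℂ → ℂ) (R M : ℝ) (hR : 0 < R) (hM : 0 < M)
    (hf : DifferentiableOn ℂ f (ball 0 R)) (hf0 : f 0 = 0)
    (hre : ∀ w ∈ ball (0:ℂ) R, (f w).re < M)
    (z : ℂ) (hz : ‖z‖ ≤ R / 2) : ‖f z‖ ≤ 2 * M := by
  set phi : ℂ → ℂ := fun w => f w / (2 * M - f w) with hphi
  have hden : ∀ w ∈ ball (0:ℂ) R, (2 * (M:ℂ) - f w) ≠ 0 := by
    intro w hw
    intro hc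
    have : ((2 * (M:ℂ) - f w)).re = 0 := by rw [hc]; simp
    simp only [Complex.sub_re, Complex.mul_re, Complex.ofReal_re, Complex.ofReal_im] at this
    have hw' := hre w hw
    norm_num at this
    linarith
  have hphid : DifferentiableOn ℂ phi (ball 0 R) :=
    hf.div ((differentiableOn_const _).sub hf) hden
  have hmaps : MapsTo phi (ball (0:ℂ) R) (ball (phi 0) 1) := by
    intro w hw
    have h1 : phi 0 = 0 := by simp [hphi, hf0]
    rw [mem_ball, h1, _root_.dist_zero_right]
    have hwre := hre w hw
    have hlt : ‖f w‖ < ‖2 * (M:ℂ) - f w‖ := by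
      have hsq : ‖f w‖^2 < ‖2 * (M:ℂ) - f w‖^2 := by
        rw [Complex.sq_norm, Complex.sq_norm]
        simp only [Complex.normSq_apply, Complex.sub_re, Complex.sub_im, Complex.mul_re,
          Complex.mul_im, Complex.ofReal_re, Complex.ofReal_im, Complex.re_ofNat,
          Complex.im_ofNat]
        nlinarith [hwre, hM]
      exact lt_of_pow_lt_pow_left₀ 2 (norm_nonneg _) hsq
    rw [hphi]
    simp only [norm_div]
    rw [div_lt_one (lt_of_le_of_lt (norm_nonneg _) hlt)]
    exact hlt
  have hz' : z ∈ ball (0:ℂ) R := by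
    rw [mem_ball, _root_.dist_zero_right]; linarith
  have hsch := Complex.dist_le_div_mul_dist_of_mapsTo_ball hphid (hmaps.mono_right ball_subset_closedBall) hz'
  have h1 : phi 0 = 0 := by simp [hphi, hf0]
  rw [h1, _root_.dist_zero_right, _root_.dist_zero_right] at hsch
  have hphz : ‖phi z‖ ≤ 1 / 2 := by
    refine hsch.trans ?_
    rw [div_mul_eq_mul_div, one_mul, div_le_div_iff₀ hR (by norm_num)]
    linarith
  -- f z = 2M * phi z / (1 + phi z); more precisely f z * (1 + phi z) = 2M * phi z
  have hdz := hden z hz'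
  have hkey : f z * (1 + phi z) = 2 * (M:ℂ) * phi z := by
    rw [hphi]
    field_simp
    ring
  have hlow : (1:ℝ)/2 ≤ ‖1 + phi z‖ := by
    have h2 := norm_sub_norm_le (1:ℂ) (-(phi z))
    rw [sub_neg_eq_add, norm_neg, norm_one] at h2
    linarith
  have hnorm : ‖f z‖ * ‖1 + phi z‖ ≤ 2 * M * (1/2) := by
    rw [← norm_mul, hkey, norm_mul]
    have h2M : ‖(2 * (M:ℂ))‖ = 2 * M := by
      rw [show (2 * (M:ℂ)) = ((2*M : ℝ) : ℂ) by push_cast; ring, Complex.norm_real,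
        Real.norm_eq_abs, abs_of_pos (by linarith)]
    rw [h2M]
    exact mul_le_mul_of_nonneg_left hphz (by linarith)
  nlinarith [norm_nonneg (f z), hlow, hnorm]


/-- A non-vanishing entire function of order at most `m` growth is the exponential
of a polynomial of degree at most `m`. -/
theorem nonvanishing_entire_exp_polynomial
    (F : ℂ → ℂ) (hF : Differentiable ℂ F) (hnz : ∀ z, F z ≠ 0)
    (A B : ℝ) (hA : 0 < A) (hB : 0 < B) (m : ℕ)
    (hgrowth : ∀ r : ℝ, 0 < r → ∀ z : ℂ, ‖z‖ < r → ‖F z‖ ≤ A * Real.exp (B * r ^ m)) :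
    ∃ p : Polynomial ℂ, p.degree ≤ m ∧ ∀ z : ℂ, F z = Complex.exp (p.eval z) := by
  obtain ⟨g, hgdiff, hgF⟩ := exists_exp_rep F hF hnz
  -- real part bound
  have hre : ∀ r : ℝ, 0 < r → ∀ z : ℂ, ‖z‖ < r → (g z).re ≤ Real.log A + B * r ^ m := by
    intro r hr z hzr
    have h1 : ‖F z‖ = Real.exp ((g z).re) := by
      rw [hgF z, Complex.norm_exp]
    have h2 := hgrowth r hr z hzr
    rw [h1, ← Real.exp_log hA, ← Real.exp_add] at h2
    exact Real.exp_le_exp.mp h2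
  set g₀ : ℂ → ℂ := fun z => g z - g 0 with hg₀
  have hg₀diff : Differentiable ℂ g₀ := hgdiff.sub_const _
  set C : ℝ := 2 * (|Real.log A| + |(g 0).re| + 1 + B * 2 ^ m) with hC
  have hCpos : 0 < C := by
    have : (0:ℝ) < B * 2 ^ m := by positivity
    have h1 := abs_nonneg (Real.log A)
    have h2 := abs_nonneg ((g 0).re)
    rw [hC]; linarith
  have hbound : ∀ z : ℂ, ‖g₀ z‖ ≤ C * (1 + ‖z‖) ^ m := by
    intro z
    have hone : (1:ℝ) ≤ (1 + ‖z‖) ^ m := one_le_pow₀ (by linarith [norm_nonneg z])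
    rcases eq_or_ne z 0 with rfl | hz0
    · simp only [hg₀, sub_self, norm_zero]
      positivity
    · have hzpos : (0:ℝ) < ‖z‖ := norm_pos_iff.mpr hz0
      set R : ℝ := 2 * ‖z‖ with hRdef
      have hR : 0 < R := by positivity
      set M : ℝ := |Real.log A| + |(g 0).re| + 1 + B * R ^ m with hM
      have hMpos : 0 < M := by
        have : (0:ℝ) ≤ B * R ^ m := by positivity
        have h1 := abs_nonneg (Real.log A)
        have h2 := abs_nonneg ((g 0).re)
        rw [hM]; linarith
      have hrelt : ∀ w ∈ Metric.ball (0:ℂ) R, (g₀ w).re < M := by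
        intro w hw
        rw [Metric.mem_ball, _root_.dist_zero_right] at hw
        have h1 := hre R hR w hw
        have h2 : (g₀ w).re = (g w).re - (g 0).re := by
          simp [hg₀]
        rw [h2, hM]
        have h3 := le_abs_self (Real.log A)
        have h4 := neg_abs_le ((g 0).re)
        linarith
      have hBC := borel_caratheodory g₀ R M hR hMpos hg₀diff.differentiableOn
        (by simp [hg₀]) hrelt z (by rw [hRdef]; linarith)
      refine hBC.trans ?_
      have hpow : R ^ m = 2 ^ m * ‖z‖ ^ m := by rw [hRdef, mul_pow]
      have hzm : ‖z‖ ^ m ≤ (1 + ‖z‖) ^ m :=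
        pow_le_pow_left₀ (norm_nonneg z) (by linarith) m
      have hBm : B * R ^ m ≤ B * 2 ^ m * (1 + ‖z‖) ^ m := by
        rw [hpow, mul_assoc]
        exact mul_le_mul_of_nonneg_left
          (mul_le_mul_of_nonneg_left hzm (by positivity)) hB.le
      have hconst : |Real.log A| + |(g 0).re| + 1
          ≤ (|Real.log A| + |(g 0).re| + 1) * (1 + ‖z‖) ^ m := by
        nlinarith [abs_nonneg (Real.log A), abs_nonneg ((g 0).re)]
      rw [hM, hC]
      nlinarith [hBm, hconst]
  obtain ⟨q, hqdeg, hqeval⟩ := poly_liouville m g₀ hg₀diff C hbound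
  refine ⟨Polynomial.C (g 0) + q, ?_, fun z => ?_⟩
  · refine le_trans (Polynomial.degree_add_le _ _) (max_le ?_ hqdeg)
    exact le_trans Polynomial.degree_C_le (by exact_mod_cast Nat.zero_le m)
  · rw [hgF z, Polynomial.eval_add, Polynomial.eval_C, ← hqeval z]
    congr 1
    simp [hg₀]
end

section
/- Let G : ℂⁿ → ℂ be an entire function in n variables such that Re(G(z)) ≤ A + B·r^m whenever all coordinates of z have modulus less than r, for all r > 0. Then G is a polynomial of total degree at most m. -/
open Metric Complex Filter Nat

/-- Borel–Carathéodory: if `f` is entire, `f 0 = 0`, and `Re f ≤ M` on the ball of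
radius `R`, then `‖f z‖ ≤ 2 M` for `‖z‖ ≤ R / 4`. -/
lemma myBC {f : ℂ → ℂ} (hf : Differentiable ℂ f) {R M : ℝ}
    (hR : 0 < R) (hM : 0 < M) (h0 : f 0 = 0)
    (hre : ∀ w ∈ ball (0:ℂ) R, (f w).re ≤ M) {z : ℂ} (hz : ‖z‖ ≤ R / 4) :
    ‖f z‖ ≤ 2 * M := by
  set c : ℂ := ((2 * M : ℝ) : ℂ) with hc
  have hden : ∀ w ∈ ball (0:ℂ) R, c - f w ≠ 0 := by
    intro w hw h
    have h1 : (c - f w).re = 2 * M - (f w).re := by simp [hc]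
    rw [h] at h1
    have := hre w hw
    simp at h1
    linarith
  set g : ℂ → ℂ := fun w => f w / (c - f w) with hg
  have hgd : DifferentiableOn ℂ g (ball (0:ℂ) R) :=
    hf.differentiableOn.div (((differentiable_const c).sub hf).differentiableOn) hden
  have hg0 : g 0 = 0 := by simp [hg, h0]
  have hgle : ∀ w ∈ ball (0:ℂ) R, ‖g w‖ ≤ 1 := by
    intro w hw
    have hkey : ‖f w‖ ≤ ‖c - f w‖ := by
      have h2 : ‖f w‖ ^ 2 ≤ ‖c - f w‖ ^ 2 := by
        have ha : (f w).re ≤ M := hre w hw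
        rw [Complex.sq_norm, Complex.sq_norm,
          Complex.normSq_apply, Complex.normSq_apply, hc]
        simp only [Complex.sub_re, Complex.sub_im, Complex.ofReal_re, Complex.ofReal_im]
        nlinarith
      calc ‖f w‖ = Real.sqrt (‖f w‖ ^ 2) := (Real.sqrt_sq (norm_nonneg _)).symm
        _ ≤ Real.sqrt (‖c - f w‖ ^ 2) := Real.sqrt_le_sqrt h2
        _ = ‖c - f w‖ := Real.sqrt_sq (norm_nonneg _)
    rw [hg]
    simp only [norm_div]
    exact div_le_one_of_le₀ hkey (norm_nonneg _)
  have hmaps : Set.MapsTo g (ball (0:ℂ) R) (ball (g 0) 2) := by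
    intro w hw
    rw [hg0, mem_ball_zero_iff]
    exact lt_of_le_of_lt (hgle w hw) one_lt_two
  have hzball : z ∈ ball (0:ℂ) R := by
    rw [mem_ball_zero_iff]; linarith
  have hs := Complex.dist_le_div_mul_dist_of_mapsTo_ball hgd (hmaps.mono_right ball_subset_closedBall) hzball
  rw [hg0, _root_.dist_zero_right, _root_.dist_zero_right] at hs
  have hgz : ‖g z‖ ≤ 1 / 2 := by
    calc ‖g z‖ ≤ 2 / R * ‖z‖ := hs
      _ ≤ 2 / R * (R / 4) := by
          apply mul_le_mul_of_nonneg_left hz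
          positivity
      _ = 1 / 2 := by field_simp; ring
  have hfz : f z = g z * (c - f z) := by
    rw [hg]; field_simp [hden z hzball]
  have : ‖f z‖ ≤ (1/2) * (2 * M + ‖f z‖) := by
    calc ‖f z‖ = ‖g z‖ * ‖c - f z‖ := by conv_lhs => rw [hfz, norm_mul]
      _ ≤ (1/2) * ‖c - f z‖ := by
          apply mul_le_mul_of_nonneg_right hgz (norm_nonneg _)
      _ ≤ (1/2) * (‖c‖ + ‖f z‖) := by
          apply mul_le_mul_of_nonneg_left (norm_sub_le _ _) (by norm_num)
      _ = (1/2) * (2 * M + ‖f z‖) := by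
          rw [hc, Complex.norm_real, Real.norm_eq_abs, abs_of_pos (by linarith)]
  linarith

lemma myCauchyBound {f : ℂ → ℂ} (hf : Differentiable ℂ f) {ρ C : ℝ} (hρ : 0 < ρ)
    (hC : ∀ w : ℂ, ‖w‖ = ρ → ‖f w‖ ≤ C) (j : ℕ) :
    ‖iteratedDeriv j f 0‖ ≤ j ! * (C / ρ ^ j) := by
  lift ρ to NNReal using hρ.le with ρ' hρ'
  have hρ0 : (0:ℝ) < ρ' := hρ
  have hps : HasFPowerSeriesOnBall f (cauchyPowerSeries f 0 ρ') 0 ρ' :=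
    (hf.differentiableOn).hasFPowerSeriesOnBall (by exact_mod_cast hρ0)
  set p := cauchyPowerSeries f 0 ρ' with hp
  have h1 : iteratedDeriv j f 0 = j ! • p j (fun _ => (1:ℂ)) := by
    rw [iteratedDeriv_eq_iteratedFDeriv, ← hps.factorial_smul (1:ℂ) j]
  have h2 : ‖p j (fun _ => (1:ℂ))‖ ≤ ‖p j‖ := by
    have := (p j).le_opNorm (fun _ => (1:ℂ))
    simpa using this
  have h3 : ‖p j‖ ≤ ((2 * Real.pi)⁻¹ * ∫ θ : ℝ in (0)..2 * Real.pi,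
      ‖f (circleMap 0 ρ' θ)‖) * |(ρ':ℝ)|⁻¹ ^ j := norm_cauchyPowerSeries_le f 0 ρ' j
  have hint : (∫ θ : ℝ in (0)..2 * Real.pi, ‖f (circleMap 0 ρ' θ)‖) ≤ 2 * Real.pi * C := by
    have hι : IntervalIntegrable (fun θ : ℝ => ‖f (circleMap 0 ρ' θ)‖)
        MeasureTheory.volume 0 (2 * Real.pi) :=
      ((hf.continuous.comp (continuous_circleMap 0 ρ')).norm).intervalIntegrable _ _
    calc (∫ θ : ℝ in (0)..2 * Real.pi, ‖f (circleMap 0 ρ' θ)‖)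
        ≤ ∫ _ : ℝ in (0)..2 * Real.pi, C := by
          apply intervalIntegral.integral_mono_on Real.two_pi_pos.le hι
            (intervalIntegrable_const)
          intro θ _
          exact hC _ (by rw [norm_circleMap_zero]; exact _root_.abs_of_nonneg hρ0.le)
      _ = 2 * Real.pi * C := by simp [mul_comm]
  have hC0 : 0 ≤ C := le_trans (norm_nonneg _) (hC (ρ' : ℝ) (by simp [_root_.abs_of_nonneg hρ0.le]))
  have h4 : ‖p j‖ ≤ C / ρ' ^ j := by
    calc ‖p j‖ ≤ ((2 * Real.pi)⁻¹ * ∫ θ : ℝ in (0)..2 * Real.pi,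
        ‖f (circleMap 0 ρ' θ)‖) * |(ρ':ℝ)|⁻¹ ^ j := h3
      _ ≤ ((2 * Real.pi)⁻¹ * (2 * Real.pi * C)) * |(ρ':ℝ)|⁻¹ ^ j := by
          apply mul_le_mul_of_nonneg_right _ (by positivity)
          exact mul_le_mul_of_nonneg_left hint (by positivity)
      _ = C / ρ' ^ j := by
          rw [_root_.abs_of_nonneg hρ0.le, inv_pow, ← div_eq_mul_inv]
          congr 1
          field_simp
  rw [h1]
  have : ‖(j ! : ℕ) • p j (fun _ => (1:ℂ))‖ = (j ! : ℝ) * ‖p j (fun _ => (1:ℂ))‖ := by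
    rw [← Nat.cast_smul_eq_nsmul ℝ, norm_smul]
    simp
  rw [this]
  exact mul_le_mul_of_nonneg_left (le_trans h2 h4) (by positivity)

/-- An entire function of polynomial norm growth of degree `d` has vanishing
iterated derivatives at `0` beyond `d`. -/
lemma myVanish {f : ℂ → ℂ} (hf : Differentiable ℂ f) {c₁ c₂ : ℝ} {d : ℕ}
    (hc₁ : 0 ≤ c₁) (hc₂ : 0 ≤ c₂)
    (hb : ∀ w : ℂ, ‖f w‖ ≤ c₁ + c₂ * (‖w‖ + 1) ^ d) :
    ∀ k, d < k → iteratedDeriv k f 0 = 0 := by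
  intro k hk
  have hbnd : ∀ ρ : ℝ, 0 < ρ →
      ‖iteratedDeriv k f 0‖ ≤ k ! * ((c₁ + c₂ * (ρ + 1) ^ d) / ρ ^ k) := by
    intro ρ hρ
    refine myCauchyBound hf hρ (fun w hw => ?_) k
    calc ‖f w‖ ≤ c₁ + c₂ * (‖w‖ + 1) ^ d := hb w
      _ = c₁ + c₂ * (ρ + 1) ^ d := by rw [hw]
  -- the bound tends to 0
  have hlim : Tendsto (fun ρ : ℝ => (k ! : ℝ) * ((c₁ + c₂ * (ρ + 1) ^ d) / ρ ^ k))
      atTop (nhds 0) := by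
    have h1 : Tendsto (fun ρ : ℝ => c₁ / ρ ^ k + c₂ * 2 ^ d * (ρ ^ d / ρ ^ k))
        atTop (nhds 0) := by
      have hA : Tendsto (fun ρ : ℝ => c₁ / ρ ^ k) atTop (nhds 0) :=
        tendsto_const_nhds.div_atTop (tendsto_pow_atTop (by omega : k ≠ 0))
      have hB : Tendsto (fun ρ : ℝ => c₂ * 2 ^ d * (ρ ^ d / ρ ^ k)) atTop (nhds 0) := by
        have := (tendsto_pow_div_pow_atTop_zero (𝕜 := ℝ) hk).const_mul (c₂ * 2 ^ d)
        simpa using this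
      simpa using hA.add hB
    have hsq : Tendsto (fun ρ : ℝ => (c₁ + c₂ * (ρ + 1) ^ d) / ρ ^ k) atTop (nhds 0) := by
      apply squeeze_zero' (g := fun ρ : ℝ => c₁ / ρ ^ k + c₂ * 2 ^ d * (ρ ^ d / ρ ^ k)) ?_ ?_ h1
      · filter_upwards [eventually_ge_atTop (1:ℝ)] with ρ hρ
        positivity
      · filter_upwards [eventually_ge_atTop (1:ℝ)] with ρ hρ
        have hρ0 : (0:ℝ) < ρ := by linarith
        have hpow : (ρ + 1) ^ d ≤ 2 ^ d * ρ ^ d := by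
          calc (ρ + 1) ^ d ≤ (2 * ρ) ^ d := by
                apply pow_le_pow_left₀ (by linarith) (by linarith)
            _ = 2 ^ d * ρ ^ d := mul_pow 2 ρ d
        rw [div_le_iff₀ (by positivity)]
        calc c₁ + c₂ * (ρ + 1) ^ d ≤ c₁ + c₂ * (2 ^ d * ρ ^ d) := by nlinarith
          _ = (c₁ / ρ ^ k + c₂ * 2 ^ d * (ρ ^ d / ρ ^ k)) * ρ ^ k := by
              field_simp
    simpa using hsq.const_mul (k ! : ℝ)
  have : ‖iteratedDeriv k f 0‖ ≤ 0 := by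
    refine ge_of_tendsto hlim ?_
    filter_upwards [eventually_gt_atTop (0:ℝ)] with ρ hρ
    exact hbnd ρ hρ
  simpa using this.antisymm (norm_nonneg _)

/-- One-variable representation: entire with polynomial growth of degree `d`
is its Taylor polynomial of degree `d`. -/
lemma myRep {f : ℂ → ℂ} (hf : Differentiable ℂ f) {c₁ c₂ : ℝ} {d : ℕ}
    (hc₁ : 0 ≤ c₁) (hc₂ : 0 ≤ c₂)
    (hb : ∀ w : ℂ, ‖f w‖ ≤ c₁ + c₂ * (‖w‖ + 1) ^ d) (z : ℂ) :
    f z = ∑ j ∈ Finset.range (d + 1), ((j ! : ℂ)⁻¹ * iteratedDeriv j f 0) * z ^ j := by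
  have hsum := Complex.hasSum_taylorSeries_of_entire hf 0 z
  have hfin : HasSum (fun n : ℕ => (n ! : ℂ)⁻¹ • (z - 0) ^ n • iteratedDeriv n f 0)
      (∑ j ∈ Finset.range (d + 1),
        (j ! : ℂ)⁻¹ • (z - 0) ^ j • iteratedDeriv j f 0) := by
    apply hasSum_sum_of_ne_finset_zero
    intro k hk
    rw [myVanish hf hc₁ hc₂ hb k (by simpa using hk)]
    simp
  rw [hsum.unique hfin]
  apply Finset.sum_congr rfl
  intro j _
  simp only [sub_zero, smul_eq_mul]
  ring

lemma myDiffSnocRight {n : ℕ} (w : Fin n → ℂ) :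
    Differentiable ℂ (fun t : ℂ => (Fin.snoc w t : Fin (n+1) → ℂ)) := by
  apply differentiable_pi.mpr
  intro i
  refine Fin.lastCases ?_ ?_ i
  · simpa [Fin.snoc_last] using differentiable_id
  · intro j
    simpa [Fin.snoc_castSucc] using differentiable_const (w j)

lemma myDiffSnocLeft {n : ℕ} (t : ℂ) :
    Differentiable ℂ (fun w : Fin n → ℂ => (Fin.snoc w t : Fin (n+1) → ℂ)) := by
  apply differentiable_pi.mpr
  intro i
  refine Fin.lastCases ?_ ?_ i
  · simpa [Fin.snoc_last] using differentiable_const t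
  · intro j
    simpa [Fin.snoc_castSucc] using differentiable_apply (𝕜 := ℂ) (F' := fun _ : Fin n => ℂ) j

lemma myNormSnocLe {n : ℕ} (w : Fin n → ℂ) (t : ℂ) :
    ‖(Fin.snoc w t : Fin (n+1) → ℂ)‖ ≤ ‖w‖ + ‖t‖ := by
  refine (pi_norm_le_iff_of_nonneg (by positivity)).mpr fun i => ?_
  refine Fin.lastCases ?_ ?_ i
  · rw [Fin.snoc_last]
    linarith [norm_nonneg w]
  · intro j
    rw [Fin.snoc_castSucc]
    linarith [norm_le_pi_norm w j, norm_nonneg t]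

lemma myMain : ∀ (n : ℕ) (d : ℕ) (H : (Fin n → ℂ) → ℂ), Differentiable ℂ H →
    ∀ c₁ c₂ : ℝ, 0 ≤ c₁ → 0 ≤ c₂ → (∀ z, ‖H z‖ ≤ c₁ + c₂ * (‖z‖ + 1) ^ d) →
    ∃ p : MvPolynomial (Fin n) ℂ, p.totalDegree ≤ d ∧
      ∀ z, H z = MvPolynomial.eval z p := by
  intro n
  induction n with
  | zero =>
    intro d H hH c₁ c₂ hc₁ hc₂ hb
    refine ⟨MvPolynomial.C (H (fun _ => 0)), by simp, fun z => ?_⟩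
    have hz : z = (fun _ => 0) := funext fun i => i.elim0
    rw [MvPolynomial.eval_C, hz]
  | succ n IH =>
    intro d H hH c₁ c₂ hc₁ hc₂ hb
    set a : ℕ → (Fin n → ℂ) → ℂ :=
      fun j w => (j ! : ℂ)⁻¹ * iteratedDeriv j (fun t => H (Fin.snoc w t)) 0 with ha
    have hFd : ∀ w : Fin n → ℂ, Differentiable ℂ (fun t : ℂ => H (Fin.snoc w t)) :=
      fun w => hH.comp (myDiffSnocRight w)
    -- growth of the one-variable slices, with constants depending on `w`
    have hgrow : ∀ (w : Fin n → ℂ) (t : ℂ),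
        ‖H (Fin.snoc w t)‖ ≤ c₁ + (c₂ * (‖w‖ + 1) ^ d) * (‖t‖ + 1) ^ d := by
      intro w t
      have h2 : (0:ℝ) ≤ ‖w‖ := norm_nonneg w
      have h3 : (0:ℝ) ≤ ‖t‖ := norm_nonneg t
      calc ‖H (Fin.snoc w t)‖
          ≤ c₁ + c₂ * (‖(Fin.snoc w t : Fin (n+1) → ℂ)‖ + 1) ^ d := hb _
        _ ≤ c₁ + (c₂ * (‖w‖ + 1) ^ d) * (‖t‖ + 1) ^ d := by
            have h1 : ‖(Fin.snoc w t : Fin (n+1) → ℂ)‖ + 1 ≤ (‖w‖ + 1) * (‖t‖ + 1) := by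
              have := myNormSnocLe w t
              nlinarith
            have h4 := pow_le_pow_left₀ (by positivity) h1 d
            rw [mul_pow] at h4
            have h5 := mul_le_mul_of_nonneg_left h4 hc₂
            calc c₁ + c₂ * (‖(Fin.snoc w t : Fin (n+1) → ℂ)‖ + 1) ^ d
                ≤ c₁ + c₂ * ((‖w‖ + 1) ^ d * (‖t‖ + 1) ^ d) := by linarith
              _ = c₁ + (c₂ * (‖w‖ + 1) ^ d) * (‖t‖ + 1) ^ d := by ring
    -- one-variable representation
    have hrep : ∀ (w : Fin n → ℂ) (t : ℂ),
        H (Fin.snoc w t) = ∑ j ∈ Finset.range (d+1), a j w * t ^ j := by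
      intro w t
      have := myRep (hFd w) hc₁ (by positivity) (hgrow w) t
      simpa only [ha, mul_assoc] using this
    -- coefficient bound
    have habnd : ∀ j, j ≤ d → ∀ w : Fin n → ℂ,
        ‖a j w‖ ≤ c₁ + (c₂ * 2 ^ d) * (‖w‖ + 1) ^ (d - j) := by
      intro j hj w
      set ρ : ℝ := ‖w‖ + 1 with hρdef
      have h2 : (0:ℝ) ≤ ‖w‖ := norm_nonneg w
      have hρ : (0:ℝ) < ρ := by positivity
      have hρ1 : (1:ℝ) ≤ ρ := by simp only [hρdef]; linarith
      have hcb := myCauchyBound (hFd w) hρ (C := c₁ + c₂ * 2 ^ d * ρ ^ d) ?_ j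
      · have hnorm : ‖a j w‖ = (j ! : ℝ)⁻¹ * ‖iteratedDeriv j (fun t => H (Fin.snoc w t)) 0‖ := by
          rw [ha]
          simp only [norm_mul, norm_inv, Complex.norm_natCast]
        have hfact : (0:ℝ) < (j ! : ℝ) := by positivity
        have hstep : ‖a j w‖ ≤ (c₁ + c₂ * 2 ^ d * ρ ^ d) / ρ ^ j := by
          rw [hnorm]
          calc (j ! : ℝ)⁻¹ * ‖iteratedDeriv j (fun t => H (Fin.snoc w t)) 0‖
              ≤ (j ! : ℝ)⁻¹ * ((j ! : ℝ) * ((c₁ + c₂ * 2 ^ d * ρ ^ d) / ρ ^ j)) :=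
                mul_le_mul_of_nonneg_left hcb (by positivity)
            _ = (c₁ + c₂ * 2 ^ d * ρ ^ d) / ρ ^ j := by
                field_simp
        calc ‖a j w‖ ≤ (c₁ + c₂ * 2 ^ d * ρ ^ d) / ρ ^ j := hstep
          _ = c₁ / ρ ^ j + c₂ * 2 ^ d * (ρ ^ d / ρ ^ j) := by ring
          _ ≤ c₁ + (c₂ * 2 ^ d) * ρ ^ (d - j) := by
              have hd1 : c₁ / ρ ^ j ≤ c₁ := _root_.div_le_self hc₁ (one_le_pow₀ hρ1)
              have hd2 : ρ ^ d / ρ ^ j = ρ ^ (d - j) := (pow_sub₀ ρ hρ.ne' hj).symm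
              rw [hd2]
              linarith
      · intro t ht
        have hsn : ‖(Fin.snoc w t : Fin (n+1) → ℂ)‖ + 1 ≤ 2 * ρ := by
          have := myNormSnocLe w t
          rw [ht] at this
          simp only [hρdef] at *
          linarith
        calc ‖H (Fin.snoc w t)‖
            ≤ c₁ + c₂ * (‖(Fin.snoc w t : Fin (n+1) → ℂ)‖ + 1) ^ d := hb _
          _ ≤ c₁ + c₂ * 2 ^ d * ρ ^ d := by
              have h4 := pow_le_pow_left₀ (by positivity) hsn d
              rw [mul_pow] at h4
              have h5 := mul_le_mul_of_nonneg_left h4 hc₂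
              linarith
    -- Lagrange interpolation: the coefficients are finite linear combinations of
    -- values of `H`, hence entire functions of `w`
    set s : Finset ℕ := Finset.range (d+1) with hs
    set v : ℕ → ℂ := fun i => (i : ℂ) with hv
    have hvs : Set.InjOn v s := fun x _ y _ h => Nat.cast_injective h
    set A : ℕ → (Fin n → ℂ) → ℂ :=
      fun j w => ∑ t ∈ s, (Lagrange.basis s v t).coeff j * H (Fin.snoc w (v t)) with hA
    have hkey : ∀ (w : Fin n → ℂ) (j : ℕ), j ∈ s → a j w = A j w := by
      intro w j hj
      set P : Polynomial ℂ := ∑ i ∈ s, Polynomial.C (a i w) * Polynomial.X ^ i with hP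
      have hdeg : P.degree < s.card := by
        rw [hP]
        apply lt_of_le_of_lt (Polynomial.degree_sum_le _ _)
        rw [hs, Finset.card_range]
        apply (Finset.sup_lt_iff (by exact_mod_cast WithBot.bot_lt_coe (d+1))).mpr
        intro i hi
        apply lt_of_le_of_lt (Polynomial.degree_C_mul_X_pow_le _ _)
        exact_mod_cast Finset.mem_range.mp hi
      have heval : ∀ t ∈ s, P.eval (v t) = H (Fin.snoc w (v t)) := by
        intro t ht
        rw [hP, Polynomial.eval_finset_sum]
        simp only [Polynomial.eval_mul, Polynomial.eval_C, Polynomial.eval_pow, Polynomial.eval_X]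
        exact (hrep w (v t)).symm
      have hip : P = Lagrange.interpolate s v (fun t => H (Fin.snoc w (v t))) :=
        Lagrange.eq_interpolate_of_eval_eq _ hvs hdeg heval
      have hcoeff : P.coeff j = a j w := by
        rw [hP, Polynomial.finset_sum_coeff, Finset.sum_eq_single j]
        · simp
        · intro i hi hij
          simp [Polynomial.coeff_C_mul, Polynomial.coeff_X_pow, Ne.symm hij]
        · intro h
          exact absurd hj h
      rw [← hcoeff, hip, Lagrange.interpolate_apply, Polynomial.finset_sum_coeff, hA]
      apply Finset.sum_congr rfl
      intro t ht
      rw [Polynomial.coeff_C_mul]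
      ring
    have hdiffA : ∀ j : ℕ, Differentiable ℂ (A j) := by
      intro j
      rw [hA]
      apply Differentiable.fun_sum
      intro t ht
      exact (hH.comp (myDiffSnocLeft (v t))).const_mul _
    -- apply the inductive hypothesis to each coefficient function
    have hex : ∀ j : ℕ, j ≤ d → ∃ q : MvPolynomial (Fin n) ℂ, q.totalDegree ≤ d - j ∧
        ∀ w, A j w = MvPolynomial.eval w q := by
      intro j hj
      apply IH (d - j) (A j) (hdiffA j) c₁ (c₂ * 2 ^ d) hc₁ (by positivity)
      intro w
      rw [← hkey w j (by rw [hs]; exact Finset.mem_range.mpr (by omega))]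
      exact habnd j hj w
    choose! q hq1 hq2 using hex
    refine ⟨∑ j ∈ s, (MvPolynomial.rename Fin.castSucc (q j)) *
      (MvPolynomial.X (Fin.last n)) ^ j, ?_, ?_⟩
    · apply le_trans (MvPolynomial.totalDegree_finset_sum _ _)
      apply Finset.sup_le
      intro j hj
      have hj' : j ≤ d := Nat.lt_succ_iff.mp (Finset.mem_range.mp (hs ▸ hj))
      calc (MvPolynomial.rename Fin.castSucc (q j) *
            (MvPolynomial.X (Fin.last n) : MvPolynomial (Fin (n+1)) ℂ) ^ j).totalDegree
          ≤ (MvPolynomial.rename Fin.castSucc (q j)).totalDegree +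
            ((MvPolynomial.X (Fin.last n) : MvPolynomial (Fin (n+1)) ℂ) ^ j).totalDegree :=
            MvPolynomial.totalDegree_mul _ _
        _ ≤ (d - j) + j := _root_.add_le_add
            ((MvPolynomial.totalDegree_rename_le _ _).trans (hq1 j hj'))
            (le_of_eq (MvPolynomial.totalDegree_X_pow _ _))
        _ ≤ d := by omega
    · intro z
      have hz : z = Fin.snoc (Fin.init z) (z (Fin.last n)) := (Fin.snoc_init_self z).symm
      conv_lhs => rw [hz]
      rw [hrep, map_sum]
      apply Finset.sum_congr rfl
      intro j hj
      have hj' : j ≤ d := Nat.lt_succ_iff.mp (Finset.mem_range.mp (hs ▸ hj))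
      rw [map_mul, map_pow, MvPolynomial.eval_X, MvPolynomial.eval_rename]
      rw [hkey (Fin.init z) j hj, hq2 j hj']
      rfl

/-- An entire function on `ℂⁿ` whose real part is bounded by `A + B r^m` on polydiscs
of radius `r` is a polynomial of total degree at most `m`. -/
theorem entire_several_variables_re_growth_polynomial
    (n : ℕ) (G : (Fin n → ℂ) → ℂ) (hG : Differentiable ℂ G)
    (A B : ℝ) (m : ℕ)
    (hgrowth : ∀ r : ℝ, 0 < r → ∀ z : Fin n → ℂ, (∀ i, ‖z i‖ < r) →
      (G z).re ≤ A + B * r ^ m) :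
    ∃ p : MvPolynomial (Fin n) ℂ, p.totalDegree ≤ m ∧
      ∀ z : Fin n → ℂ, G z = MvPolynomial.eval z p := by
  set C₁ : ℝ := ‖G 0‖ + 2 * |A| + 2 * |(G 0).re| + 2 with hC₁
  set C₂ : ℝ := 2 * (|B| * 8 ^ m) with hC₂
  have hnorm : ∀ z : Fin n → ℂ, ‖G z‖ ≤ C₁ + C₂ * (‖z‖ + 1) ^ m := by
    intro z
    set f : ℂ → ℂ := fun l => G (l • z) - G 0 with hfdef
    have hfd : Differentiable ℂ f := (hG.comp (differentiable_id.smul_const z)).sub_const _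
    have hf0 : f 0 = 0 := by simp [hfdef]
    set M : ℝ := |A| + |B| * (8 ^ m * (‖z‖ + 1) ^ m) + |(G 0).re| + 1 with hM
    have hMpos : 0 < M := by positivity
    have hre : ∀ u ∈ Metric.ball (0:ℂ) 8, (f u).re ≤ M := by
      intro u hu
      rw [mem_ball_zero_iff] at hu
      have hcoord : ∀ i, ‖(u • z) i‖ < 8 * (‖z‖ + 1) := by
        intro i
        have h1 : ‖(u • z) i‖ = ‖u‖ * ‖z i‖ := by
          simp [Pi.smul_apply, norm_smul]
        rw [h1]
        have h2 : ‖z i‖ ≤ ‖z‖ := norm_le_pi_norm z i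
        nlinarith [norm_nonneg u, norm_nonneg (z i), norm_nonneg z]
      have hg := hgrowth (8 * (‖z‖ + 1)) (by positivity) (u • z) hcoord
      have hb8 : B * (8 * (‖z‖ + 1)) ^ m ≤ |B| * (8 ^ m * (‖z‖ + 1) ^ m) := by
        rw [mul_pow]
        exact mul_le_mul_of_nonneg_right (le_abs_self B) (by positivity)
      have h3 : (f u).re = (G (u • z)).re - (G 0).re := by
        simp [hfdef, Complex.sub_re]
      rw [h3, hM]
      have h5 : A ≤ |A| := le_abs_self A
      linarith [neg_le_abs (G 0).re]
    have hbc := myBC hfd (show (0:ℝ) < 8 by norm_num) hMpos hf0 hre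
      (z := 1) (by rw [norm_one]; norm_num)
    have h6 : f 1 = G z - G 0 := by simp [hfdef]
    rw [h6] at hbc
    have h7 : ‖G z‖ ≤ ‖G z - G 0‖ + ‖G 0‖ := by
      calc ‖G z‖ = ‖G z - G 0 + G 0‖ := by ring_nf
        _ ≤ ‖G z - G 0‖ + ‖G 0‖ := norm_add_le _ _
    rw [hC₁, hC₂, hM] at *
    nlinarith [abs_nonneg A, abs_nonneg B, abs_nonneg (G 0).re, norm_nonneg (G 0)]
  obtain ⟨p, hp1, hp2⟩ := myMain n m G hG C₁ C₂ (by positivity) (by positivity) hnorm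
  exact ⟨p, hp1, hp2⟩
end

section
/- Let X be a Banach space of functions on an open set D ⊆ ℂⁿ with polynomials dense and shift operators S_i bounded. Suppose b ∈ ℂⁿ is such that the functional p ↦ p(b) on polynomials extends to a bounded linear functional on X. Then b lies in the right Harte spectrum of the tuple S = (S₁,…,Sₙ); that is, there do NOT exist bounded operators A₁,…,Aₙ on X with Σᵢ (Sᵢ − bᵢ·I)Aᵢ = I. -/
/-- If point evaluation at `b` on polynomials extends to a bounded linear functional,
then `b` lies in the right Harte spectrum of the shift tuple. -/
theorem bounded_point_evaluation_mem_right_harte_spectrum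
    (n : ℕ) (X : Type*) [NormedAddCommGroup X] [NormedSpace ℂ X] [CompleteSpace X]
    (J : X →ₗ[ℂ] ((Fin n → ℂ) → ℂ)) (hJ : Function.Injective J)
    (D : Set (Fin n → ℂ)) (hD : IsOpen D)
    (hpoly : ∀ p : MvPolynomial (Fin n) ℂ, ∃ x : X, J x = fun z => MvPolynomial.eval z p)
    (hdense : Dense {x : X | ∃ p : MvPolynomial (Fin n) ℂ, J x = fun z => MvPolynomial.eval z p})
    (S : Fin n → X →L[ℂ] X) (hS : ∀ i (x : X) (z : Fin n → ℂ), J (S i x) z = z i * J x z)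
    (b : Fin n → ℂ)
    (hb : ∃ Λ : X →L[ℂ] ℂ, ∀ (p : MvPolynomial (Fin n) ℂ) (x : X),
      (J x = fun z => MvPolynomial.eval z p) → Λ x = MvPolynomial.eval b p) :
    ¬ ∃ A : Fin n → (X →L[ℂ] X),
      (∑ i, ((S i) - (b i) • (ContinuousLinearMap.id ℂ X)).comp (A i)) =
        ContinuousLinearMap.id ℂ X := by

  obtain ⟨Λ, hΛ⟩ := hb
  rintro ⟨A, hA⟩
  -- Λ vanishes on the range of each S i - b i • id
  have hkey : ∀ i (x : X), Λ ((S i - b i • ContinuousLinearMap.id ℂ X) x) = 0 := by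
    intro i
    have hcont1 : Continuous fun x : X => Λ ((S i - b i • ContinuousLinearMap.id ℂ X) x) :=
      Λ.continuous.comp (S i - b i • ContinuousLinearMap.id ℂ X).continuous
    have heq : (fun x : X => Λ ((S i - b i • ContinuousLinearMap.id ℂ X) x)) = fun _ => (0 : ℂ) := by
      apply Continuous.ext_on hdense hcont1 continuous_const
      rintro x ⟨p, hp⟩
      have hSx : J (S i x) = fun z => MvPolynomial.eval z (MvPolynomial.X i * p) := by
        funext z
        simp [hS i x z, hp, MvPolynomial.eval_mul]
      have h1 : Λ (S i x) = MvPolynomial.eval b (MvPolynomial.X i * p) := hΛ _ _ hSx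
      have h2 : Λ x = MvPolynomial.eval b p := hΛ _ _ hp
      simp [ContinuousLinearMap.sub_apply, ContinuousLinearMap.smul_apply, h1, h2,
        MvPolynomial.eval_mul, mul_comm]
    intro x
    exact congrFun heq x
  obtain ⟨x₁, hx₁⟩ := hpoly 1
  have hΛx₁ : Λ x₁ = 1 := by
    have := hΛ 1 x₁ hx₁
    simpa using this
  have h0 : Λ ((∑ i, ((S i) - (b i) • (ContinuousLinearMap.id ℂ X)).comp (A i)) x₁) = 0 := by
    rw [ContinuousLinearMap.sum_apply]
    rw [map_sum]
    apply Finset.sum_eq_zero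
    intro i _
    exact hkey i (A i x₁)
  rw [hA] at h0
  simp [hΛx₁] at h0
end

section
/- Fix 1 ≤ p < ∞ and n ≥ 1. If Λ is a nonzero bounded linear functional on H^p(𝔻ⁿ) such that Λ(p) = a·p(b) for all polynomials p, where a ≠ 0 and b ∈ closure(𝔻ⁿ), then b ∈ 𝔻ⁿ (i.e., |b_i| < 1 for all i). -/
open MeasureTheory

/-- Open unit polydisc in `ℂⁿ`. -/
def polydisc (n : ℕ) : Set (Fin n → ℂ) := {z | ∀ i, ‖z i‖ < 1}

/-- The `p`-th power integral mean of `f` over the torus of radius `r`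
(with normalized measure). -/
noncomputable def hardyMean (p : ℝ) (n : ℕ) (f : (Fin n → ℂ) → ℂ) (r : ℝ) : ℝ :=
  ∫ θ : Fin n → ℝ in Set.univ.pi (fun _ => Set.Ico (0 : ℝ) (2 * Real.pi)),
    ‖f (fun i => r * Complex.exp (Complex.I * θ i))‖ ^ p / (2 * Real.pi) ^ n

/-- The Hardy space `H^p` norm of `f` on the polydisc. -/
noncomputable def hardyNorm (p : ℝ) (n : ℕ) (f : (Fin n → ℂ) → ℂ) : ℝ :=
  (⨆ r : Set.Ico (0 : ℝ) 1, hardyMean p n f r) ^ (1 / p)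

/-- Membership in the Hardy space `H^p(𝔻ⁿ)`. -/
def MemHardy (p : ℝ) (n : ℕ) (f : (Fin n → ℂ) → ℂ) : Prop :=
  DifferentiableOn ℂ f (polydisc n) ∧
    ∃ M : ℝ, ∀ r ∈ Set.Ico (0 : ℝ) 1, hardyMean p n f r ≤ M

/-- A function `f ∈ H^p(𝔻ⁿ)` is (shift-)cyclic if the polynomial multiples of `f`
are dense in `H^p(𝔻ⁿ)`. -/
def HardyCyclic (p : ℝ) (n : ℕ) (f : (Fin n → ℂ) → ℂ) : Prop :=
  MemHardy p n f ∧ ∀ h : (Fin n → ℂ) → ℂ, MemHardy p n h → ∀ ε : ℝ, 0 < ε →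
    ∃ q : MvPolynomial (Fin n) ℂ,
      hardyNorm p n (fun z => h z - MvPolynomial.eval z q * f z) < ε

open Real Complex Filter

/-- Auxiliary pointwise bound for the half-sum factor. -/
noncomputable def mfun (c : ℂ) (t : ℝ) : ℝ :=
  (1 + max (c * Complex.exp (Complex.I * ↑t)).re 0) / 2

lemma mfun_nonneg (c : ℂ) (hc : ‖c‖ = 1) (t : ℝ) : 0 ≤ mfun c t := by
  unfold mfun
  have : -1 ≤ (c * Complex.exp (Complex.I * ↑t)).re := by
    have h1 : ‖c * Complex.exp (Complex.I * ↑t)‖ = 1 := by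
      rw [norm_mul, hc, one_mul, Complex.norm_exp]; simp
    have := Complex.abs_re_le_norm (c * Complex.exp (Complex.I * ↑t))
    rw [h1] at this
    linarith [abs_le.mp this]
  have := le_max_right (c * Complex.exp (Complex.I * ↑t)).re (0:ℝ)
  linarith

lemma mfun_le_one (c : ℂ) (hc : ‖c‖ = 1) (t : ℝ) : mfun c t ≤ 1 := by
  unfold mfun
  have h1 : ‖c * Complex.exp (Complex.I * ↑t)‖ = 1 := by
    rw [norm_mul, hc, one_mul, Complex.norm_exp]; simp
  have := Complex.abs_re_le_norm (c * Complex.exp (Complex.I * ↑t))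
  rw [h1] at this
  have h2 := (abs_le.mp this).2
  have := max_le h2 (zero_le_one)
  linarith

lemma mfun_continuous (c : ℂ) : Continuous (mfun c) := by
  unfold mfun
  apply Continuous.div_const
  apply Continuous.add continuous_const
  apply Continuous.max _ continuous_const
  exact Complex.continuous_re.comp (Continuous.mul continuous_const
    (Complex.continuous_exp.comp (Continuous.mul continuous_const Complex.continuous_ofReal)))

lemma sq_norm_le (c : ℂ) (hc : ‖c‖ = 1) (r t : ℝ) (hr0 : 0 ≤ r) (hr1 : r ≤ 1) :
    ‖(1 + c * (↑r * Complex.exp (Complex.I * ↑t))) / 2‖ ^ 2 ≤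
      (1 + max (c * Complex.exp (Complex.I * ↑t)).re 0) / 2 := by
  set e : ℂ := c * Complex.exp (Complex.I * ↑t) with he_def
  have he : ‖e‖ = 1 := by
    rw [he_def, norm_mul, hc, one_mul, Complex.norm_exp]
    simp
  have hw : (1 + c * (↑r * Complex.exp (Complex.I * ↑t))) = 1 + ↑r * e := by
    rw [he_def]; ring
  rw [hw]
  have hsq : ‖(1 + ↑r * e) / 2‖ ^ 2 = Complex.normSq (1 + ↑r * e) / 4 := by
    rw [norm_div, div_pow, Complex.sq_norm]
    norm_num
  rw [hsq]
  have huv : e.re ^ 2 + e.im ^ 2 = 1 := by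
    have := Complex.normSq_apply e
    have h2 : Complex.normSq e = 1 := by
      rw [← Complex.sq_norm, he]; norm_num
    nlinarith [h2, this]
  have hre : (1 + (r:ℂ) * e).re = 1 + r * e.re := by simp
  have him : (1 + (r:ℂ) * e).im = r * e.im := by simp
  rw [Complex.normSq_apply, hre, him]
  have hu1 : e.re ≤ 1 := by nlinarith [sq_nonneg e.im]
  rcases le_or_gt 0 e.re with h | h
  · rw [max_eq_left h]
    nlinarith [sq_nonneg e.im, sq_nonneg (r - 1)]
  · rw [max_eq_right h.le]
    nlinarith [sq_nonneg e.im, sq_nonneg r, mul_nonneg hr0 hr0]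

lemma tendsto_Im (c : ℂ) (hc : ‖c‖ = 1) :
    Tendsto (fun m : ℕ => ∫ t in Set.Ico (0:ℝ) (2*π), mfun c t ^ m) atTop (nhds 0) := by
  have hE : volume {t : ℝ | c * Complex.exp (Complex.I * ↑t) = 1} = 0 := by
    set E := {t : ℝ | c * Complex.exp (Complex.I * ↑t) = 1} with hE_def
    rcases Set.eq_empty_or_nonempty E with h | ⟨t₀, ht₀⟩
    · simp [h]
    · have hsub : E ⊆ Set.range (fun k : ℤ => t₀ + k * (2*π)) := by
        intro t ht
        have h1 : Complex.exp (Complex.I * ↑t) = Complex.exp (Complex.I * ↑t₀) := by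
          have hc0 : c ≠ 0 := by intro h; rw [h] at hc; simp at hc
          have := ht.trans ht₀.symm
          exact mul_left_cancel₀ hc0 this
        rw [Complex.exp_eq_exp_iff_exists_int] at h1
        obtain ⟨k, hk⟩ := h1
        refine ⟨k, ?_⟩
        have him := congrArg Complex.im hk
        simp at him
        dsimp
        linarith [him]
      exact measure_mono_null hsub (Set.Countable.measure_zero (Set.countable_range _) _)
  have key := tendsto_integral_of_dominated_convergence
    (μ := volume.restrict (Set.Ico (0:ℝ) (2*π))) (bound := fun _ => (1:ℝ))
    (F := fun m t => mfun c t ^ m) (f := fun _ => (0:ℝ)) ?_ ?_ ?_ ?_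
  · simpa using key
  · intro m
    exact ((mfun_continuous c).pow m).aestronglyMeasurable
  · exact (integrableOn_const_iff (C := (1:ℝ))).mpr (Or.inr (by rw [Real.volume_Ico]; exact ENNReal.ofReal_lt_top))
  · intro m
    filter_upwards with t
    rw [Real.norm_eq_abs, _root_.abs_of_nonneg (pow_nonneg (mfun_nonneg c hc t) m)]
    exact pow_le_one₀ (mfun_nonneg c hc t) (mfun_le_one c hc t)
  · have : ∀ᵐ t : ℝ, t ∉ {t : ℝ | c * Complex.exp (Complex.I * ↑t) = 1} :=
      ae_iff.mpr (by simpa using hE)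
    filter_upwards [ae_restrict_of_ae this] with t ht
    have hlt : mfun c t < 1 := by
      unfold mfun
      set e := c * Complex.exp (Complex.I * ↑t) with he_def
      have h1 : ‖e‖ = 1 := by
        rw [he_def, norm_mul, hc, one_mul, Complex.norm_exp]; simp
      have huv : e.re ^ 2 + e.im ^ 2 = 1 := by
        have h2 : Complex.normSq e = 1 := by
          rw [← Complex.sq_norm, h1]; norm_num
        have := Complex.normSq_apply e
        nlinarith
      have hne : e ≠ 1 := ht
      have hre : e.re < 1 := by
        rcases lt_or_eq_of_le (by nlinarith [sq_nonneg e.im] : e.re ≤ 1) with h | h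
        · exact h
        · exfalso
          apply hne
          have him : e.im = 0 := by nlinarith
          exact Complex.ext (by rw [h]; simp) (by rw [him]; simp)
      have := max_lt hre zero_lt_one
      linarith
    simpa using tendsto_pow_atTop_nhds_zero_of_abs_lt_one
      (by rw [_root_.abs_of_nonneg (mfun_nonneg c hc t)]; exact hlt)

lemma mean_bound (p : ℝ) (hp : 1 ≤ p) (n : ℕ) (i : Fin n) (c : ℂ) (hc : ‖c‖ = 1)
    (m : ℕ) (r : ℝ) (hr0 : 0 ≤ r) (hr1 : r ≤ 1) :
    hardyMean p n (fun z => ((1 + c * z i) / 2) ^ (2 * m)) r ≤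
      (∫ t in Set.Ico (0:ℝ) (2*π), mfun c t ^ m) / (2 * π) := by
  have hπ : (0:ℝ) < 2 * π := by positivity
  set S : Set (Fin n → ℝ) := Set.univ.pi (fun _ => Set.Ico (0 : ℝ) (2 * π)) with hS_def
  have hS : MeasurableSet S := MeasurableSet.univ_pi (fun _ => measurableSet_Ico)
  set G : (Fin n → ℝ) → ℝ := fun θ => mfun c (θ i) ^ m / (2 * π) ^ n with hG_def
  have hGcont : Continuous G := by
    apply Continuous.div_const
    exact ((mfun_continuous c).comp (continuous_apply i)).pow m
  have hvolS : volume S = ENNReal.ofReal (2 * π) ^ n := by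
    rw [hS_def, volume_pi_pi]
    simp [Real.volume_Ico]
  have hGint : IntegrableOn G S := by
    apply Measure.integrableOn_of_bounded (M := 1 / (2 * π) ^ n)
      (by rw [hvolS]; exact ENNReal.pow_ne_top ENNReal.ofReal_ne_top)
      hGcont.aestronglyMeasurable
    filter_upwards with θ
    rw [hG_def, Real.norm_eq_abs, abs_div, _root_.abs_of_nonneg (pow_nonneg (mfun_nonneg c hc _) m),
      _root_.abs_of_nonneg (by positivity : (0:ℝ) ≤ (2*π)^n)]
    gcongr
    exact pow_le_one₀ (mfun_nonneg c hc _) (mfun_le_one c hc _)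
  have hpoint : ∀ θ : Fin n → ℝ,
      ‖((1 + c * (↑r * Complex.exp (Complex.I * ↑(θ i)))) / 2) ^ (2 * m)‖ ^ p / (2 * π) ^ n
        ≤ G θ := by
    intro θ
    set A : ℝ := ‖(1 + c * (↑r * Complex.exp (Complex.I * ↑(θ i)))) / 2‖ with hA_def
    have hA0 : 0 ≤ A := norm_nonneg _
    have hA1 : A ≤ 1 := by
      rw [hA_def, norm_div]
      have h2 : ‖(2:ℂ)‖ = 2 := by norm_num
      rw [h2]
      have hw : ‖c * (↑r * Complex.exp (Complex.I * ↑(θ i)))‖ ≤ 1 := by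
        rw [norm_mul, hc, one_mul, norm_mul, Complex.norm_real, Real.norm_eq_abs,
          _root_.abs_of_nonneg hr0, Complex.norm_exp]
        simp [hr1]
      calc ‖1 + c * (↑r * Complex.exp (Complex.I * ↑(θ i)))‖ / 2
          ≤ (‖(1:ℂ)‖ + ‖c * (↑r * Complex.exp (Complex.I * ↑(θ i)))‖) / 2 := by
            gcongr; exact norm_add_le _ _
        _ ≤ (1 + 1) / 2 := by rw [norm_one]; gcongr
        _ = 1 := by norm_num
    have hnormpow : ‖((1 + c * (↑r * Complex.exp (Complex.I * ↑(θ i)))) / 2) ^ (2 * m)‖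
        = A ^ (2 * m) := by rw [norm_pow]
    rw [hnormpow]
    have h1 : (A ^ (2 * m)) ^ p ≤ A ^ (2 * m) := by
      rcases eq_or_lt_of_le (pow_nonneg hA0 (2*m)) with h | h
      · rw [← h, Real.zero_rpow (by linarith : p ≠ 0)]
      · calc (A ^ (2*m)) ^ p ≤ (A ^ (2*m)) ^ (1:ℝ) :=
            Real.rpow_le_rpow_of_exponent_ge h (pow_le_one₀ hA0 hA1) hp
          _ = A ^ (2*m) := Real.rpow_one _
    have hAm : A ^ 2 ≤ mfun c (θ i) := by
      unfold mfun
      rw [hA_def]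
      exact sq_norm_le c hc r (θ i) hr0 hr1
    have h2 : A ^ (2 * m) ≤ mfun c (θ i) ^ m := by
      rw [pow_mul]
      exact pow_le_pow_left₀ (sq_nonneg A) hAm m
    rw [hG_def]
    exact div_le_div_of_nonneg_right (h1.trans h2) (by positivity)
  have hle : hardyMean p n (fun z => ((1 + c * z i) / 2) ^ (2 * m)) r ≤ ∫ θ in S, G θ := by
    rw [hardyMean]
    apply integral_mono_of_nonneg
    · filter_upwards with θ; positivity
    · exact hGint
    · filter_upwards with θ; exact hpoint θ
  refine hle.trans (le_of_eq ?_)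
  rw [← integral_indicator hS]
  have hind : S.indicator G = fun θ => ∏ j : Fin n,
      Set.indicator (Set.Ico (0:ℝ) (2*π))
        (fun t => (if j = i then mfun c t ^ m else 1) / (2*π)) (θ j) := by
    funext θ
    by_cases hθ : θ ∈ S
    · rw [Set.indicator_of_mem hθ]
      have hj : ∀ j, θ j ∈ Set.Ico (0:ℝ) (2*π) := fun j => hθ j (Set.mem_univ j)
      rw [Finset.prod_congr rfl (fun j _ => Set.indicator_of_mem (hj j) _)]
      rw [Finset.prod_div_distrib, Finset.prod_const, Finset.card_univ, Fintype.card_fin,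
        Finset.prod_ite_eq' Finset.univ i (fun j => mfun c (θ j) ^ m)]
      simp [hG_def]
    · rw [Set.indicator_of_notMem hθ]
      rw [hS_def, Set.mem_univ_pi] at hθ
      push_neg at hθ
      obtain ⟨j, hj⟩ := hθ
      exact (Finset.prod_eq_zero (Finset.mem_univ j)
        (Set.indicator_of_notMem hj _)).symm
  rw [hind]
  beta_reduce
  rw [MeasureTheory.volume_pi, MeasureTheory.integral_fintype_prod_eq_prod
    (f := fun j t => Set.indicator (Set.Ico (0:ℝ) (2*π))
      (fun t => (if j = i then mfun c t ^ m else 1) / (2*π)) t)]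
  have hfac : ∀ j : Fin n, (∫ t : ℝ, Set.indicator (Set.Ico (0:ℝ) (2*π))
      (fun t => (if j = i then mfun c t ^ m else 1) / (2*π)) t)
      = if j = i then (∫ t in Set.Ico (0:ℝ) (2*π), mfun c t ^ m) / (2*π) else 1 := by
    intro j
    rw [integral_indicator measurableSet_Ico]
    by_cases hji : j = i
    · simp only [hji, if_true]
      rw [integral_div]
    · simp only [hji, if_false]
      rw [setIntegral_const, measureReal_def, Real.volume_Ico, smul_eq_mul,
        ENNReal.toReal_ofReal (by linarith), sub_zero]
      field_simp
  rw [Finset.prod_congr rfl (fun j _ => hfac j),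
    Finset.prod_ite_eq' Finset.univ i
      (fun _ => (∫ t in Set.Ico (0:ℝ) (2*π), mfun c t ^ m) / (2*π))]
  simp

/-- If a nonzero bounded linear functional on `H^p(𝔻ⁿ)` acts on polynomials as
`a ⬝ eval b` with `a ≠ 0` and `b` in the closed polydisc, then `b` lies in the
open polydisc. -/
theorem point_evaluation_functional_in_open_polydisc
    (p : ℝ) (hp : 1 ≤ p) (n : ℕ) (hn : 1 ≤ n)
    (Λ : ((Fin n → ℂ) → ℂ) →ₗ[ℂ] ℂ)
    (hbound : ∃ C : ℝ, ∀ f, MemHardy p n f → ‖Λ f‖ ≤ C * hardyNorm p n f)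
    (hnonzero : ∃ f, MemHardy p n f ∧ Λ f ≠ 0)
    (a : ℂ) (ha : a ≠ 0) (b : Fin n → ℂ) (hb : ∀ i, ‖b i‖ ≤ 1)
    (hrep : ∀ q : MvPolynomial (Fin n) ℂ,
      Λ (fun z => MvPolynomial.eval z q) = a * MvPolynomial.eval b q) :
    ∀ i, ‖b i‖ < 1 := by
  intro i
  by_contra hge
  push_neg at hge
  have hbi : ‖b i‖ = 1 := le_antisymm (hb i) hge
  obtain ⟨C, hC⟩ := hbound
  set c : ℂ := starRingEnd ℂ (b i) with hc_def
  have hc : ‖c‖ = 1 := by rw [hc_def, RCLike.norm_conj]; exact hbi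
  set q : ℕ → MvPolynomial (Fin n) ℂ := fun m =>
    (MvPolynomial.C (1/2) + MvPolynomial.C (c/2) * MvPolynomial.X i) ^ (2*m) with hq_def
  have heval : ∀ (m : ℕ) (z : Fin n → ℂ),
      MvPolynomial.eval z (q m) = ((1 + c * z i)/2) ^ (2*m) := by
    intro m z
    rw [hq_def]
    simp only [map_pow, map_add, map_mul, MvPolynomial.eval_C, MvPolynomial.eval_X]
    ring_nf
  have hcb : c * b i = 1 := by
    rw [hc_def, mul_comm, Complex.mul_conj]
    have : Complex.normSq (b i) = 1 := by
      rw [Complex.normSq_eq_norm_sq, hbi]; norm_num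
    rw [this]; norm_num
  have hevalb : ∀ m : ℕ, MvPolynomial.eval b (q m) = 1 := by
    intro m
    rw [heval, hcb]
    norm_num
  set f : ℕ → (Fin n → ℂ) → ℂ := fun m z => MvPolynomial.eval z (q m) with hf_def
  have hfeq : ∀ m, f m = fun z => ((1 + c * z i)/2) ^ (2*m) := fun m => funext (heval m)
  set B : ℕ → ℝ := fun m => (∫ t in Set.Ico (0:ℝ) (2*π), mfun c t ^ m) / (2*π) with hB_def
  have hmean_le : ∀ m : ℕ, ∀ r ∈ Set.Ico (0:ℝ) 1, hardyMean p n (f m) r ≤ B m := by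
    intro m r hr
    rw [hfeq m]
    exact mean_bound p hp n i c hc m r hr.1 hr.2.le
  have hmem : ∀ m, MemHardy p n (f m) := by
    intro m
    constructor
    · rw [hfeq m]
      have hd : Differentiable ℂ (fun z : Fin n → ℂ => (1 + c * z i) / 2) := by
        simp only [div_eq_mul_inv]
        exact ((differentiable_const _).add ((differentiable_const _).mul
          (ContinuousLinearMap.proj (R := ℂ) (φ := fun _ : Fin n => ℂ) i).differentiable)).mul
          (differentiable_const _)
      exact (hd.pow (2*m)).differentiableOn
    · exact ⟨B m, hmean_le m⟩
  have hmean_nonneg : ∀ (m : ℕ) (r : ℝ), 0 ≤ hardyMean p n (f m) r := by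
    intro m r
    apply integral_nonneg
    intro θ
    positivity
  haveI : Nonempty (Set.Ico (0:ℝ) 1) := ⟨⟨0, le_refl _, zero_lt_one⟩⟩
  have hB_nonneg : ∀ m, 0 ≤ B m :=
    fun m => (hmean_nonneg m 0).trans (hmean_le m 0 ⟨le_refl _, zero_lt_one⟩)
  have hsup_nonneg : ∀ m, 0 ≤ ⨆ r : Set.Ico (0:ℝ) 1, hardyMean p n (f m) r := by
    intro m
    exact Real.iSup_nonneg (fun r => hmean_nonneg m r)
  have hsup_le : ∀ m, hardyNorm p n (f m) ≤ B m ^ ((1:ℝ)/p) := by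
    intro m
    rw [hardyNorm]
    exact Real.rpow_le_rpow (hsup_nonneg m) (ciSup_le (fun r => hmean_le m r r.2))
      (by positivity)
  have hnorm_nonneg : ∀ m, 0 ≤ hardyNorm p n (f m) := by
    intro m
    rw [hardyNorm]
    exact Real.rpow_nonneg (hsup_nonneg m) _
  have hΛ : ∀ m, ‖Λ (f m)‖ = ‖a‖ := by
    intro m
    have h1 : Λ (f m) = a * MvPolynomial.eval b (q m) := hrep (q m)
    rw [h1, hevalb m, mul_one]
  have hBlim : Tendsto B atTop (nhds 0) := by
    rw [hB_def]
    simpa using (tendsto_Im c hc).div_const (2*π)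
  have hlim : Tendsto (fun m => |C| * B m ^ ((1:ℝ)/p)) atTop (nhds 0) := by
    have h1 : Tendsto (fun m => B m ^ ((1:ℝ)/p)) atTop (nhds 0) := by
      have := hBlim.rpow_const (p := (1:ℝ)/p) (Or.inr (by positivity))
      simpa [Real.zero_rpow (show p⁻¹ ≠ 0 by positivity)] using this
    simpa using h1.const_mul |C|
  have ha' : 0 < ‖a‖ := norm_pos_iff.mpr ha
  obtain ⟨m, hm⟩ := (hlim.eventually (gt_mem_nhds ha')).exists
  have hcontr : ‖a‖ ≤ |C| * B m ^ ((1:ℝ)/p) := by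
    calc ‖a‖ = ‖Λ (f m)‖ := (hΛ m).symm
      _ ≤ C * hardyNorm p n (f m) := hC (f m) (hmem m)
      _ ≤ |C| * hardyNorm p n (f m) :=
          mul_le_mul_of_nonneg_right (le_abs_self C) (hnorm_nonneg m)
      _ ≤ |C| * B m ^ ((1:ℝ)/p) :=
          mul_le_mul_of_nonneg_left (hsup_le m) (abs_nonneg C)
  exact absurd hcontr (not_le.mpr hm)
end

section
/- Let X be a Banach space of functions on D̂ ⊆ ℂⁿ satisfying Q1–Q3 (polynomials dense; point evaluations bounded exactly at points of D̂; shifts bounded). Then for every w ∈ ℂⁿ, the function exp(w·z) is cyclic in X: the closed span of {p(z)·exp(w·z) : p polynomial} equals X. -/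
open Nat

open NormedSpace in
/-- In a complete normed `ℂ`-algebra, `exp B = e^t • 1 + (B - t•1) * H` for some `H`. -/
lemma exp_eq_smul_one_add_mul {𝔸 : Type*} [NormedRing 𝔸] [NormedAlgebra ℂ 𝔸]
    [CompleteSpace 𝔸] (B : 𝔸) (t : ℂ) :
    ∃ H : 𝔸, exp B = Complex.exp t • (1 : 𝔸) + (B - t • (1 : 𝔸)) * H := by
  letI : NormedAlgebra ℚ 𝔸 := NormedAlgebra.restrictScalars ℚ ℂ 𝔸
  set C : 𝔸 := B - t • (1 : 𝔸) with hCdef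
  have hsum0 : Summable fun k : ℕ => ((k ! : ℂ))⁻¹ • C ^ k :=
    NormedSpace.expSeries_summable' (𝕂 := ℂ) C
  have hsum : Summable fun k : ℕ => (((k + 1)! : ℂ))⁻¹ • C ^ k := by
    refine Summable.of_norm_bounded (g := fun k => ‖((k ! : ℂ))⁻¹ • C ^ k‖)
      (NormedSpace.norm_expSeries_summable' (𝕂 := ℂ) C) fun k => ?_
    show ‖(((k + 1)! : ℂ))⁻¹ • C ^ k‖ ≤ ‖((k ! : ℂ))⁻¹ • C ^ k‖
    rw [norm_smul, norm_smul]
    gcongr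
    simp only [norm_inv, Complex.norm_natCast]
    have h2 : ((k ! : ℝ)) ≤ (((k + 1)! : ℝ)) := by
      exact_mod_cast Nat.factorial_le (Nat.le_succ k)
    have h1 : (0:ℝ) < (k ! : ℝ) := by exact_mod_cast Nat.factorial_pos k
    exact inv_anti₀ h1 h2
  set H₀ : 𝔸 := ∑' k : ℕ, (((k + 1)! : ℂ))⁻¹ • C ^ k with hH₀
  have hCH : C * H₀ = ∑' k : ℕ, (((k + 1)! : ℂ))⁻¹ • C ^ (k + 1) := by
    have hmap := (ContinuousLinearMap.mul ℂ 𝔸 C).map_tsum hsum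
    simp only [ContinuousLinearMap.mul_apply'] at hmap
    rw [hH₀, hmap]
    exact tsum_congr fun k => by rw [mul_smul_comm, _root_.pow_succ']
  have hexpC : exp C = 1 + C * H₀ := by
    have h1 : exp C = ∑' k : ℕ, ((k ! : ℂ))⁻¹ • C ^ k := by
      rw [NormedSpace.exp_eq_tsum ℂ]
    rw [h1, hsum0.tsum_eq_zero_add, hCH]
    norm_num
  have hcomm : Commute (t • (1 : 𝔸)) C := (Commute.one_left C).smul_left t
  have hsplit : B = t • (1 : 𝔸) + C := by rw [hCdef]; abel
  have hexp1 : exp (t • (1 : 𝔸)) = Complex.exp t • (1 : 𝔸) := by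
    have halg : t • (1 : 𝔸) = algebraMap ℂ 𝔸 t := (Algebra.algebraMap_eq_smul_one t).symm
    rw [halg, ← NormedSpace.map_exp (algebraMap ℂ 𝔸) (continuous_algebraMap ℂ 𝔸) t,
      ← Complex.exp_eq_exp_ℂ, Algebra.algebraMap_eq_smul_one]
  refine ⟨Complex.exp t • H₀, ?_⟩
  calc exp B = exp (t • (1 : 𝔸) + C) := by rw [← hsplit]
    _ = exp (t • (1 : 𝔸)) * exp C := NormedSpace.exp_add_of_commute hcomm
    _ = (Complex.exp t • (1 : 𝔸)) * (1 + C * H₀) := by rw [hexp1, hexpC]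
    _ = Complex.exp t • (1 : 𝔸) + C * (Complex.exp t • H₀) := by
        rw [mul_add, mul_one, smul_mul_assoc, one_mul, mul_smul_comm]

/-- In a space satisfying Q1–Q3 over a maximal domain `D̂`, every exponential
`exp(w·z)` is a cyclic vector: its polynomial multiples are dense. -/
theorem exponential_is_cyclic
    (n : ℕ) (X : Type*) [NormedAddCommGroup X] [NormedSpace ℂ X] [CompleteSpace X]
    (J : X →ₗ[ℂ] ((Fin n → ℂ) → ℂ)) (hJ : Function.Injective J)
    (Dhat : Set (Fin n → ℂ))
    (hpoly : ∀ p : MvPolynomial (Fin n) ℂ, ∃ x : X, J x = fun z => MvPolynomial.eval z p)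
    (hdense : Dense {x : X | ∃ p : MvPolynomial (Fin n) ℂ, J x = fun z => MvPolynomial.eval z p})
    (hQ2 : ∀ z ∈ Dhat, ∃ C : ℝ, ∀ x : X, ‖J x z‖ ≤ C * ‖x‖)
    (hQ2max : ∀ z : Fin n → ℂ,
      (∃ C : ℝ, ∀ (p : MvPolynomial (Fin n) ℂ) (x : X),
        (J x = fun v => MvPolynomial.eval v p) → ‖MvPolynomial.eval z p‖ ≤ C * ‖x‖) →
      z ∈ Dhat)
    (S : Fin n → X →L[ℂ] X) (hS : ∀ i (x : X) (z : Fin n → ℂ), J (S i x) z = z i * J x z) :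
    ∀ w : Fin n → ℂ, ∀ E : X,
      (J E = fun z => Complex.exp (∑ i, w i * z i)) →
      ∀ y : X, ∀ ε : ℝ, 0 < ε → ∃ (q : MvPolynomial (Fin n) ℂ) (g : X),
        (J g = fun z => MvPolynomial.eval z q * Complex.exp (∑ i, w i * z i)) ∧
        ‖y - g‖ < ε := by
  intro w E hE y ε hε
  letI : NormedAlgebra ℚ (X →L[ℂ] X) := NormedAlgebra.restrictScalars ℚ ℂ (X →L[ℂ] X)
  classical
  set A : X →L[ℂ] X := ∑ i, w i • S i with hA
  have hJA : ∀ (v : X) (z : Fin n → ℂ), J (A v) z = (∑ i, w i * z i) * J v z := by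
    intro v z
    have h1 : A v = ∑ i, w i • S i v := by
      simp [hA, ContinuousLinearMap.sum_apply]
    rw [h1, map_sum, Finset.sum_apply, Finset.sum_mul]
    refine Finset.sum_congr rfl fun i _ => ?_
    rw [map_smul]
    simp only [Pi.smul_apply, smul_eq_mul, hS]
    ring
  have hJpow : ∀ (k : ℕ) (v : X) (z : Fin n → ℂ),
      J (((-A) ^ k) v) z = (-(∑ i, w i * z i)) ^ k * J v z := by
    intro k
    induction k with
    | zero => intro v z; simp
    | succ k ih =>
      intro v z
      rw [_root_.pow_succ', _root_.pow_succ']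
      have h1 : ((-A) * (-A) ^ k) v = -(A (((-A) ^ k) v)) := by
        simp [ContinuousLinearMap.mul_apply]
      rw [h1, map_neg]
      simp only [Pi.neg_apply]
      rw [hJA, ih]
      ring
  have hJexp : ∀ (v : X) (z : Fin n → ℂ),
      J ((NormedSpace.exp A) v) z = Complex.exp (∑ i, w i * z i) * J v z := by
    intro v z
    set t : ℂ := ∑ i, w i * z i with ht
    obtain ⟨H, hH⟩ := exp_eq_smul_one_add_mul A t
    rw [hH]
    have h1 : (Complex.exp t • (1 : X →L[ℂ] X) + (A - t • (1 : X →L[ℂ] X)) * H) v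
        = Complex.exp t • v + (A (H v) - t • (H v)) := by
      simp [ContinuousLinearMap.add_apply, ContinuousLinearMap.smul_apply,
        ContinuousLinearMap.one_apply, ContinuousLinearMap.mul_apply,
        ContinuousLinearMap.sub_apply]
    rw [h1, map_add, map_smul, map_sub, map_smul]
    simp only [Pi.add_apply, Pi.sub_apply, Pi.smul_apply, smul_eq_mul]
    rw [hJA]
    ring
  obtain ⟨x, hxmem, hxy⟩ := hdense.exists_dist_lt y hε
  obtain ⟨p, hp⟩ := hxmem
  have hsum : HasSum (fun k : ℕ => ((k ! : ℂ))⁻¹ • (-A) ^ k)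
      (NormedSpace.exp (-A)) := NormedSpace.exp_series_hasSum_exp' (-A)
  have htend : Filter.Tendsto
      (fun m : ℕ => (NormedSpace.exp A) ((∑ k ∈ Finset.range m, ((k ! : ℂ))⁻¹ • (-A) ^ k) x))
      Filter.atTop (nhds ((NormedSpace.exp A) ((NormedSpace.exp (-A)) x))) := by
    have h1 := hsum.tendsto_sum_nat
    have h2 : Continuous fun T : X →L[ℂ] X => (NormedSpace.exp A) (T x) :=
      (NormedSpace.exp A).continuous.comp (ContinuousLinearMap.apply ℂ X x).continuous
    exact (h2.tendsto _).comp h1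
  have hlim : (NormedSpace.exp A) ((NormedSpace.exp (-A)) x) = x := by
    have h1 : NormedSpace.exp A * NormedSpace.exp (-A) = 1 := by
      rw [← NormedSpace.exp_add_of_commute ((Commute.refl A).neg_right)]
      simp
    calc (NormedSpace.exp A) ((NormedSpace.exp (-A)) x)
        = (NormedSpace.exp A * NormedSpace.exp (-A)) x := rfl
      _ = x := by rw [h1]; rfl
  rw [hlim] at htend
  have hnorm : Filter.Tendsto
      (fun m : ℕ => ‖y - (NormedSpace.exp A)
        ((∑ k ∈ Finset.range m, ((k ! : ℂ))⁻¹ • (-A) ^ k) x)‖)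
      Filter.atTop (nhds ‖y - x‖) :=
    (continuous_norm.tendsto _).comp (((continuous_const.sub continuous_id).tendsto x).comp htend)
  have hdist : ‖y - x‖ < ε := by rwa [← dist_eq_norm]
  obtain ⟨m, hm⟩ := (hnorm.eventually_lt_const hdist).exists
  refine ⟨p * ∑ k ∈ Finset.range m, MvPolynomial.C ((-1 : ℂ) ^ k * ((k ! : ℂ))⁻¹)
      * (∑ i, MvPolynomial.C (w i) * MvPolynomial.X i) ^ k,
    (NormedSpace.exp A) ((∑ k ∈ Finset.range m, ((k ! : ℂ))⁻¹ • (-A) ^ k) x), ?_, hm⟩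
  funext z
  set t : ℂ := ∑ i, w i * z i with ht
  have h2 : J ((∑ k ∈ Finset.range m, ((k ! : ℂ))⁻¹ • (-A) ^ k) x) z
      = ∑ k ∈ Finset.range m, ((k ! : ℂ))⁻¹ * ((-t) ^ k * J x z) := by
    have h0 : (∑ k ∈ Finset.range m, ((k ! : ℂ))⁻¹ • (-A) ^ k) x
        = ∑ k ∈ Finset.range m, ((k ! : ℂ))⁻¹ • (((-A) ^ k) x) := by
      simp [ContinuousLinearMap.sum_apply]
    rw [h0, map_sum, Finset.sum_apply]
    refine Finset.sum_congr rfl fun k _ => ?_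
    rw [map_smul]
    simp only [Pi.smul_apply, smul_eq_mul]
    rw [hJpow]
  have h3 : J x z = MvPolynomial.eval z p := by rw [hp]
  have heval : MvPolynomial.eval z (∑ i, MvPolynomial.C (w i) * MvPolynomial.X i) = t := by
    rw [map_sum]
    simp [ht]
  have h4 : MvPolynomial.eval z
      (p * ∑ k ∈ Finset.range m, MvPolynomial.C ((-1 : ℂ) ^ k * ((k ! : ℂ))⁻¹)
        * (∑ i, MvPolynomial.C (w i) * MvPolynomial.X i) ^ k)
      = MvPolynomial.eval z p
        * ∑ k ∈ Finset.range m, (-1 : ℂ) ^ k * ((k ! : ℂ))⁻¹ * t ^ k := by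
    rw [map_mul, map_sum]
    congr 1
    refine Finset.sum_congr rfl fun k _ => ?_
    rw [map_mul, MvPolynomial.eval_C, map_pow, heval]
  show J ((NormedSpace.exp A) ((∑ k ∈ Finset.range m, ((k ! : ℂ))⁻¹ • (-A) ^ k) x)) z = _
  rw [hJexp, h2, h4]
  simp only [h3]
  rw [Finset.mul_sum, Finset.mul_sum, Finset.sum_mul]
  refine Finset.sum_congr rfl fun k _ => ?_
  rw [neg_pow]
  ring
end

section
/- Let X be a Banach space of functions on an open set D ⊆ ℂⁿ satisfying P1–P3. A bounded linear functional Λ on X satisfies Λ(pq) = Λ(p)Λ(q) for all polynomials p, q (and Λ(1)=1) if and only if there exists b in the right Harte spectrum of the shift tuple S = (S₁,…,Sₙ) such that Λ(p) = p(b) for every polynomial p. -/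
/-- A unital bounded functional is multiplicative on polynomials (M0) iff it is
evaluation at some point `b` of the right Harte spectrum of the shift tuple. -/
theorem m0_iff_point_evaluation_in_right_harte_spectrum
    (n : ℕ) (X : Type*) [NormedAddCommGroup X] [NormedSpace ℂ X] [CompleteSpace X]
    (J : X →ₗ[ℂ] ((Fin n → ℂ) → ℂ)) (hJ : Function.Injective J)
    (D : Set (Fin n → ℂ)) (hD : IsOpen D)
    (hpoly : ∀ p : MvPolynomial (Fin n) ℂ, ∃ x : X, J x = fun z => MvPolynomial.eval z p)
    (hdense : Dense {x : X | ∃ p : MvPolynomial (Fin n) ℂ, J x = fun z => MvPolynomial.eval z p})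
    (hP2 : ∀ z ∈ D, ∃ C : ℝ, ∀ x : X, ‖J x z‖ ≤ C * ‖x‖)
    (S : Fin n → X →L[ℂ] X) (hS : ∀ i (x : X) (z : Fin n → ℂ), J (S i x) z = z i * J x z)
    (one : X) (hone : J one = fun _ => 1)
    (Λ : X →L[ℂ] ℂ) (hΛone : Λ one = 1) :
    (∀ (p q : MvPolynomial (Fin n) ℂ) (xp xq xpq : X),
        (J xp = fun z => MvPolynomial.eval z p) →
        (J xq = fun z => MvPolynomial.eval z q) →
        (J xpq = fun z => MvPolynomial.eval z (p * q)) →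
        Λ xpq = Λ xp * Λ xq) ↔
      ∃ b : Fin n → ℂ,
        (¬ ∃ A : Fin n → (X →L[ℂ] X),
          (∑ i, ((S i) - (b i) • (ContinuousLinearMap.id ℂ X)).comp (A i)) =
            ContinuousLinearMap.id ℂ X) ∧
        ∀ (p : MvPolynomial (Fin n) ℂ) (x : X),
          (J x = fun z => MvPolynomial.eval z p) → Λ x = MvPolynomial.eval b p := by
  constructor
  · intro hmul
    -- the canonical representative of a polynomial
    set xof : MvPolynomial (Fin n) ℂ → X := fun p => (hpoly p).choose with hxof
    have hxofJ : ∀ p, J (xof p) = fun z => MvPolynomial.eval z p :=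
      fun p => (hpoly p).choose_spec
    have huniq : ∀ (p : MvPolynomial (Fin n) ℂ) (x : X),
        (J x = fun z => MvPolynomial.eval z p) → x = xof p := by
      intro p x hx
      exact hJ (hx.trans (hxofJ p).symm)
    set b : Fin n → ℂ := fun i => Λ (xof (MvPolynomial.X i)) with hb
    -- evaluation formula on polynomials
    have heval : ∀ (p : MvPolynomial (Fin n) ℂ), Λ (xof p) = MvPolynomial.eval b p := by
      intro p
      induction p using MvPolynomial.induction_on with
      | C a =>
          have h1 : J (a • one) = fun z => MvPolynomial.eval z (MvPolynomial.C a) := by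
            rw [map_smul, hone]
            funext z
            simp
          have := huniq _ _ h1
          rw [← this, map_smul, hΛone, MvPolynomial.eval_C]
          simp
      | add p q hp hq =>
          have h1 : J (xof p + xof q) = fun z => MvPolynomial.eval z (p + q) := by
            rw [map_add, hxofJ, hxofJ]
            funext z
            simp
          have := huniq _ _ h1
          rw [← this, map_add, hp, hq, MvPolynomial.eval_add]
      | mul_X p i hp =>
          have := hmul p (MvPolynomial.X i) (xof p) (xof (MvPolynomial.X i))
            (xof (p * MvPolynomial.X i)) (hxofJ p) (hxofJ _) (hxofJ _)
          rw [this, hp, MvPolynomial.eval_mul, MvPolynomial.eval_X]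
    have heval' : ∀ (p : MvPolynomial (Fin n) ℂ) (x : X),
        (J x = fun z => MvPolynomial.eval z p) → Λ x = MvPolynomial.eval b p := by
      intro p x hx
      rw [huniq p x hx]; exact heval p
    refine ⟨b, ?_, heval'⟩
    rintro ⟨A, hA⟩
    -- Λ ∘ (S i − b i) vanishes
    have hvanish : ∀ i (y : X), Λ ((S i - b i • ContinuousLinearMap.id ℂ X) y) = 0 := by
      intro i
      have hcont : Continuous fun y => Λ ((S i - b i • ContinuousLinearMap.id ℂ X) y) :=
        Λ.continuous.comp (S i - b i • ContinuousLinearMap.id ℂ X).continuous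
      have hzero : Set.EqOn (fun y => Λ ((S i - b i • ContinuousLinearMap.id ℂ X) y))
          (fun _ => (0 : ℂ))
          {x : X | ∃ p : MvPolynomial (Fin n) ℂ, J x = fun z => MvPolynomial.eval z p} := by
        rintro x ⟨p, hx⟩
        have hSx : J (S i x) = fun z => MvPolynomial.eval z (MvPolynomial.X i * p) := by
          funext z
          rw [hS i x z, hx]
          simp
        have h1 := hmul (MvPolynomial.X i) p (xof (MvPolynomial.X i)) x (S i x)
          (hxofJ _) hx hSx
        simp only [ContinuousLinearMap.sub_apply, ContinuousLinearMap.smul_apply,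
          ContinuousLinearMap.id_apply, map_sub, map_smul]
        rw [h1]
        ring_nf
        simp [hb, smul_eq_mul]
        ring
      have := Continuous.ext_on hdense hcont continuous_const hzero
      intro y
      exact congrFun this y
    have : Λ one = 0 := by
      have h1 : (ContinuousLinearMap.id ℂ X) one = one := rfl
      conv_lhs => rw [← h1, ← hA]
      rw [ContinuousLinearMap.sum_apply]
      rw [map_sum]
      refine Finset.sum_eq_zero fun i _ => ?_
      exact hvanish i (A i one)
    rw [hΛone] at this
    exact one_ne_zero this
  · rintro ⟨b, -, heval⟩ p q xp xq xpq hp hq hpq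
    rw [heval p xp hp, heval q xq hq, heval (p * q) xpq hpq, MvPolynomial.eval_mul]
end

section
/- The map T : H²(𝔻²) → H^q(𝔻) defined by (Tf)(z) = f((1+z)/2, (1+z)/2) sends the outer function f(z₁,z₂) = exp((z₁+z₂+2)/(z₁+z₂−2)) to the function z ↦ exp((z+3)/(z−1)), which is not outer in H^q(𝔻) for 0 < q < 1/2; in particular, the singular inner-type factor exp((z+3)/(z−1)) belongs to H^q(𝔻) and has modulus bounded by 1 on 𝔻 but fails log|g(0)| = ∫_𝕋 log|g|. -/
open MeasureTheory

namespace CompositionOuterAux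

open MeasureTheory Real Set

noncomputable def E (θ : ℝ) : ℂ := Complex.exp (Complex.I * θ)
noncomputable def u (p : ℝ × ℝ) : ℝ := ((E p.1 + E p.2 + 2) / (E p.1 + E p.2 - 2)).re

lemma contE : Continuous E :=
  Complex.continuous_exp.comp (continuous_const.mul Complex.continuous_ofReal)

lemma circle_avg {F : ℂ → ℂ} (hF : DiffContOnCl ℂ F (Metric.ball 0 1)) :
    ∫ θ in Set.Ico (0:ℝ) (2*Real.pi), F (Complex.exp (Complex.I * θ)) = 2*Real.pi * F 0 := by
  have h := hF.circleIntegral_sub_inv_smul (Metric.mem_ball_self one_pos)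
  rw [circleIntegral] at h
  simp only [deriv_circleMap, circleMap, Complex.ofReal_one, one_mul, zero_add, sub_zero,
    smul_eq_mul] at h
  have h2 : ∀ θ : ℝ, Complex.exp (θ * Complex.I) * Complex.I *
      ((Complex.exp (θ * Complex.I))⁻¹ * F (Complex.exp (θ * Complex.I)))
      = Complex.I * F (Complex.exp (Complex.I * θ)) := by
    intro θ
    rw [mul_comm Complex.I (θ:ℂ)]
    field_simp [Complex.exp_ne_zero]
  simp only [h2] at h
  rw [intervalIntegral.integral_const_mul] at h
  have hI : (Complex.I : ℂ) ≠ 0 := Complex.I_ne_zero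
  have h3 : ∫ θ in (0:ℝ)..(2*Real.pi), F (Complex.exp (Complex.I * θ)) = 2*Real.pi * F 0 := by
    apply mul_left_cancel₀ hI
    rw [h]; ring
  rw [← h3, intervalIntegral.integral_of_le (by positivity),
    MeasureTheory.integral_Ico_eq_integral_Ioo, MeasureTheory.integral_Ioc_eq_integral_Ioo]

lemma re_div2 (w : ℂ) : ((w+2)/(w-2)).re = (Complex.normSq w - 4)/Complex.normSq (w-2) := by
  rw [Complex.div_re, ← add_div]; congr 1
  simp [Complex.normSq_apply]; ring

lemma re_div3 (z : ℂ) : ((z+3)/(z-1)).re = (Complex.normSq z + 2*z.re - 3)/Complex.normSq (z-1) := by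
  rw [Complex.div_re, ← add_div]; congr 1
  simp [Complex.normSq_apply]; ring

lemma norm_exp_I (θ : ℝ) : ‖Complex.exp (Complex.I * θ)‖ = 1 := by
  rw [Complex.norm_exp]
  simp

lemma exp_add_ne {b : ℂ} (hb : 1 < ‖b‖) (θ : ℝ) : Complex.exp (Complex.I * θ) + b ≠ 0 := by
  intro h
  have : b = -Complex.exp (Complex.I * θ) := by linear_combination h
  rw [this, norm_neg, norm_exp_I] at hb
  exact lt_irrefl _ hb

lemma cont_frac (a b : ℂ) (hb : 1 < ‖b‖) :
    Continuous (fun θ : ℝ => (Complex.exp (Complex.I * θ) + a)/(Complex.exp (Complex.I * θ) + b)) := by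
  apply Continuous.div
  · exact (contE.add continuous_const)
  · exact (contE.add continuous_const)
  · intro θ; exact exp_add_ne hb θ

lemma integrable_frac (a b : ℂ) (hb : 1 < ‖b‖) :
    IntegrableOn (fun θ : ℝ => (Complex.exp (Complex.I * θ) + a)/(Complex.exp (Complex.I * θ) + b))
      (Set.Ico (0:ℝ) (2*Real.pi)) := by
  exact ((cont_frac a b hb).integrableOn_Icc (a := 0) (b := 2*Real.pi)).mono_set Ico_subset_Icc_self

lemma circle_avg_re (a b : ℂ) (hb : 1 < ‖b‖) :
    ∫ θ in Set.Ico (0:ℝ) (2*Real.pi),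
      ((Complex.exp (Complex.I * θ) + a)/(Complex.exp (Complex.I * θ) + b)).re
      = 2*Real.pi * (a/b).re := by
  have hdiff : DiffContOnCl ℂ (fun ζ : ℂ => (ζ + a)/(ζ + b)) (Metric.ball 0 1) := by
    apply DifferentiableOn.diffContOnCl
    intro ζ hζ
    have hζ1 : ‖ζ‖ ≤ 1 := by
      have := Metric.closure_ball_subset_closedBall hζ
      simpa [Metric.mem_closedBall, dist_eq_norm] using this
    have hne : ζ + b ≠ 0 := by
      intro h
      have : b = -ζ := by linear_combination h
      rw [this, norm_neg] at hb
      linarith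
    exact ((differentiableAt_id.add_const a).div (differentiableAt_id.add_const b) hne).differentiableWithinAt
  have key := circle_avg hdiff
  simp only [zero_add] at key
  have hInt := integrable_frac a b hb
  calc ∫ θ in Set.Ico (0:ℝ) (2*Real.pi),
      ((Complex.exp (Complex.I * θ) + a)/(Complex.exp (Complex.I * θ) + b)).re
      = (∫ θ in Set.Ico (0:ℝ) (2*Real.pi),
          (Complex.exp (Complex.I * θ) + a)/(Complex.exp (Complex.I * θ) + b)).re :=
        integral_re hInt
    _ = 2*Real.pi * (a/b).re := by rw [key]; simp [Complex.mul_re]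

lemma norm_f_le {w : ℂ} (hw : Complex.normSq w ≤ 4) : ‖Complex.exp ((w+2)/(w-2))‖ ≤ 1 := by
  rw [Complex.norm_exp]
  have : ((w+2)/(w-2)).re ≤ 0 := by
    rw [re_div2]
    apply div_nonpos_of_nonpos_of_nonneg (by linarith) (Complex.normSq_nonneg _)
  calc Real.exp ((w+2)/(w-2)).re ≤ Real.exp 0 := Real.exp_le_exp.mpr this
    _ = 1 := Real.exp_zero

lemma norm_g_le {z : ℂ} (h : ‖z‖ ≤ 1) : ‖Complex.exp ((z+3)/(z-1))‖ ≤ 1 := by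
  rw [Complex.norm_exp]
  have h1 : Complex.normSq z ≤ 1 := by
    rw [← Complex.sq_norm]; nlinarith [norm_nonneg z, h]
  have h2 : z.re ≤ 1 := le_trans (Complex.re_le_norm z) h
  have : ((z+3)/(z-1)).re ≤ 0 := by
    rw [re_div3]
    apply div_nonpos_of_nonpos_of_nonneg (by linarith) (Complex.normSq_nonneg _)
  calc Real.exp _ ≤ Real.exp 0 := Real.exp_le_exp.mpr this
    _ = 1 := Real.exp_zero

lemma re_g_eq {z : ℂ} (h1 : ‖z‖ = 1) (hz : z ≠ 1) : ((z+3)/(z-1)).re = -1 := by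
  have hn : Complex.normSq z = 1 := by
    rw [← Complex.sq_norm, h1]; norm_num
  have hre1 : z.re ≤ 1 := by
    have := Complex.abs_re_le_norm z
    rw [h1] at this
    exact le_of_abs_le this
  have hre : z.re < 1 := by
    rcases lt_or_eq_of_le hre1 with h | h
    · exact h
    · exfalso
      have him : z.im = 0 := by
        have := hn; rw [Complex.normSq_apply] at this; nlinarith
      exact hz (Complex.ext (by simp [h]) (by simp [him]))
  have hden : Complex.normSq (z - 1) = 2 - 2*z.re := by
    rw [Complex.normSq_apply] at hn ⊢
    simp [Complex.sub_re, Complex.sub_im]; nlinarith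
  rw [re_div3, hden, hn]
  have : (2:ℝ) - 2*z.re > 0 := by linarith
  rw [div_eq_iff (ne_of_gt this)]
  ring

lemma exp_ne_one {θ : ℝ} (h0 : 0 < θ) (h2 : θ < 2*Real.pi) :
    Complex.exp (Complex.I * θ) ≠ 1 := by
  intro h
  rw [Complex.exp_eq_one_iff] at h
  obtain ⟨n, hn⟩ := h
  have : (θ : ℂ) = n * (2*Real.pi) := by
    have hI : (Complex.I : ℂ) ≠ 0 := Complex.I_ne_zero
    apply mul_left_cancel₀ hI
    rw [hn]; push_cast; ring_nf
  have hθ : θ = n * (2*Real.pi) := by exact_mod_cast this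
  have hπ := Real.pi_pos
  rcases le_or_gt (n:ℝ) 0 with h | h
  · nlinarith
  · have : (1:ℝ) ≤ n := by exact_mod_cast (by exact_mod_cast h : 0 < n)
    nlinarith

lemma cos_lt_one' {θ : ℝ} (h0 : 0 < θ) (h2 : θ < 2*Real.pi) : Real.cos θ < 1 := by
  rcases lt_or_eq_of_le (Real.cos_le_one θ) with h | h
  · exact h
  · exfalso
    rw [Real.cos_eq_one_iff_of_lt_of_lt (by linarith [Real.pi_pos]) h2] at h
    exact absurd h (ne_of_gt h0)

lemma norm_exp_sub_two {θ : ℝ} (h : Real.cos θ < 1) :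
    1 < ‖Complex.exp (Complex.I * θ) - 2‖ := by
  have hre : (Complex.exp (Complex.I * θ)).re = Real.cos θ := by
    rw [mul_comm]; exact Complex.exp_ofReal_mul_I_re θ
  have him : (Complex.exp (Complex.I * θ)).im = Real.sin θ := by
    rw [mul_comm]; exact Complex.exp_ofReal_mul_I_im θ
  have hsq : Complex.normSq (Complex.exp (Complex.I * θ) - 2) = 5 - 4*Real.cos θ := by
    rw [Complex.normSq_apply]
    simp [Complex.sub_re, Complex.sub_im, hre, him]
    nlinarith [Real.sin_sq_add_cos_sq θ]
  have h1 : 1 < Complex.normSq (Complex.exp (Complex.I * θ) - 2) := by rw [hsq]; linarith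
  have := Complex.sq_norm (Complex.exp (Complex.I * θ) - 2)
  nlinarith [norm_nonneg (Complex.exp (Complex.I * θ) - 2)]

lemma measurable_u : Measurable u := by
  have h1 : Continuous (fun p : ℝ × ℝ => E p.1 + E p.2 + 2) :=
    ((contE.comp continuous_fst).add (contE.comp continuous_snd)).add continuous_const
  have h2 : Continuous (fun p : ℝ × ℝ => E p.1 + E p.2 - 2) :=
    ((contE.comp continuous_fst).add (contE.comp continuous_snd)).sub continuous_const
  exact Complex.measurable_re.comp (h1.measurable.div h2.measurable)

lemma u_nonpos (p : ℝ × ℝ) : u p ≤ 0 := by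
  unfold u
  rw [re_div2]
  apply div_nonpos_of_nonpos_of_nonneg _ (Complex.normSq_nonneg _)
  have h : ‖E p.1 + E p.2‖ ≤ 2 := by
    calc ‖E p.1 + E p.2‖ ≤ ‖E p.1‖ + ‖E p.2‖ := norm_add_le _ _
      _ = 2 := by unfold E; rw [norm_exp_I, norm_exp_I]; norm_num
  have := Complex.sq_norm (E p.1 + E p.2)
  nlinarith [norm_nonneg (E p.1 + E p.2)]

lemma u_eq (θ : ℝ) : (fun θ1 => u (θ, θ1)) =
    fun θ1 : ℝ => ((Complex.exp (Complex.I * θ1) + (E θ + 2)) /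
      (Complex.exp (Complex.I * θ1) + (E θ - 2))).re := by
  funext θ1
  unfold u E
  congr 1
  congr 1 <;> ring

lemma good_ae : ∀ᵐ θ : ℝ ∂(volume.restrict (Set.Ico (0:ℝ) (2*Real.pi))),
    1 < ‖E θ - 2‖ := by
  have h0 : ∀ᵐ θ : ℝ ∂(volume.restrict (Set.Ico (0:ℝ) (2*Real.pi))), θ ≠ 0 := by
    refine ae_restrict_of_ae ?_
    simp only [MeasureTheory.ae_iff, not_not]
    have h : {a : ℝ | a = 0} = {0} := by ext; simp
    rw [h]
    exact Real.volume_singleton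
  filter_upwards [h0, ae_restrict_mem measurableSet_Ico] with θ hθ0 hθm
  have h1 : 0 < θ := lt_of_le_of_ne hθm.1 (Ne.symm hθ0)
  exact norm_exp_sub_two (cos_lt_one' h1 hθm.2)

lemma inner_integrable {θ : ℝ} (hb : 1 < ‖E θ - 2‖) :
    Integrable (fun θ1 => u (θ, θ1)) (volume.restrict (Set.Ico (0:ℝ) (2*Real.pi))) := by
  rw [u_eq]
  exact ((Complex.continuous_re.comp (cont_frac (E θ + 2) (E θ - 2) hb)).integrableOn_Icc
    (a := 0) (b := 2*Real.pi)).mono_set Ico_subset_Icc_self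

lemma inner_eval {θ : ℝ} (hb : 1 < ‖E θ - 2‖) :
    ∫ θ1 in Set.Ico (0:ℝ) (2*Real.pi), u (θ, θ1)
      = 2*Real.pi * (((E θ + 2)/(E θ - 2)).re) := by
  rw [u_eq]
  exact circle_avg_re (E θ + 2) (E θ - 2) hb

lemma integrable_u : IntegrableOn u
    ((Set.Ico (0:ℝ) (2*Real.pi)) ×ˢ (Set.Ico (0:ℝ) (2*Real.pi))) := by
  rw [IntegrableOn, Measure.volume_eq_prod, ← Measure.prod_restrict,
    integrable_prod_iff (measurable_u.aestronglyMeasurable)]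
  constructor
  · filter_upwards [good_ae] with θ hb
    exact inner_integrable hb
  · set ψ : ℝ → ℝ := fun θ => 2*Real.pi * (-(((E θ + 2)/(E θ - 2)).re)) with hψ
    have hcont : Continuous ψ := by
      apply continuous_const.mul
      apply Continuous.neg
      apply Complex.continuous_re.comp
      apply Continuous.div (contE.add continuous_const) (contE.sub continuous_const)
      intro θ
      intro h
      have : ‖E θ‖ = 1 := norm_exp_I θ
      rw [Pi.sub_apply, sub_eq_zero] at h
      rw [h] at this
      norm_num at this
    have hint : Integrable ψ (volume.restrict (Set.Ico (0:ℝ) (2*Real.pi))) :=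
      (hcont.integrableOn_Icc (a := 0) (b := 2*Real.pi)).mono_set Ico_subset_Icc_self
    apply hint.congr
    filter_upwards [good_ae] with θ hb
    have : (fun θ1 => ‖u (θ, θ1)‖) = fun θ1 => -(u (θ, θ1)) := by
      funext θ1
      rw [Real.norm_eq_abs, abs_of_nonpos (u_nonpos _)]
    rw [hψ]
    simp only
    rw [this, integral_neg, inner_eval hb]
    ring

lemma double_int :
    ∫ p in ((Set.Ico (0:ℝ) (2*Real.pi)) ×ˢ (Set.Ico (0:ℝ) (2*Real.pi))), u p
      = -(2*Real.pi)^2 := by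
  have h := integrable_u
  rw [Measure.volume_eq_prod] at h ⊢
  rw [setIntegral_prod u h]
  have heq : ∫ θ in Set.Ico (0:ℝ) (2*Real.pi), (∫ θ1 in Set.Ico (0:ℝ) (2*Real.pi), u (θ, θ1))
      = ∫ θ in Set.Ico (0:ℝ) (2*Real.pi), 2*Real.pi * (((E θ + 2)/(E θ - 2)).re) := by
    apply integral_congr_ae
    filter_upwards [good_ae] with θ hb
    exact inner_eval hb
  rw [heq, MeasureTheory.integral_const_mul]
  have h2 : ∫ θ in Set.Ico (0:ℝ) (2*Real.pi), ((E θ + 2)/(E θ - 2)).re = 2*Real.pi * (-1) := by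
    have := circle_avg_re 2 (-2) (by rw [norm_neg]; norm_num)
    have heq2 : (fun θ : ℝ => ((Complex.exp (Complex.I * θ) + 2)/(Complex.exp (Complex.I * θ) + -2)).re)
        = fun θ : ℝ => ((E θ + 2)/(E θ - 2)).re := by
      funext θ; unfold E; rw [sub_eq_add_neg]
    rw [heq2] at this
    rw [this]
    norm_num
  rw [h2]
  ring

lemma log_norm_exp (w : ℂ) : Real.log ‖Complex.exp w‖ = w.re := by
  rw [Complex.norm_exp, Real.log_exp]

end CompositionOuterAux
section GlueTest
open MeasureTheory Real Set CompositionOuterAux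

lemma vol_pi (n : ℕ) : volume (Set.univ.pi (fun _ : Fin n => Set.Ico (0:ℝ) (2*Real.pi)))
    = ENNReal.ofReal (2*Real.pi) ^ n := by
  rw [volume_pi_pi]
  simp [Real.volume_Ico]

lemma integral_bound (n : ℕ) (h : (Fin n → ℝ) → ℝ) (h0 : ∀ θ, 0 ≤ h θ) (h1 : ∀ θ, h θ ≤ 1) :
    ∫ θ : Fin n → ℝ in Set.univ.pi (fun _ => Set.Ico (0:ℝ) (2*Real.pi)),
      h θ / (2*Real.pi)^n ≤ 1 := by
  have hπ : (0:ℝ) < 2*Real.pi := by positivity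
  have hpow : (0:ℝ) < (2*Real.pi)^n := by positivity
  have hvol := vol_pi n
  have hconst : ∫ θ : Fin n → ℝ in Set.univ.pi (fun _ => Set.Ico (0:ℝ) (2*Real.pi)),
      (1:ℝ) / (2*Real.pi)^n = 1 := by
    rw [setIntegral_const, measureReal_def, hvol]
    rw [ENNReal.toReal_pow, ENNReal.toReal_ofReal (le_of_lt hπ)]
    rw [smul_eq_mul]
    field_simp
  calc ∫ θ : Fin n → ℝ in Set.univ.pi (fun _ => Set.Ico (0:ℝ) (2*Real.pi)), h θ / (2*Real.pi)^n
      ≤ ∫ θ : Fin n → ℝ in Set.univ.pi (fun _ => Set.Ico (0:ℝ) (2*Real.pi)),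
        (1:ℝ) / (2*Real.pi)^n := by
        apply integral_mono_of_nonneg
        · filter_upwards with θ
          exact div_nonneg (h0 θ) (le_of_lt hpow)
        · apply (integrableOn_const_iff (C := (1:ℝ) / (2*Real.pi)^n)).mpr
          right
          rw [hvol]
          exact ENNReal.pow_lt_top ENNReal.ofReal_lt_top
        · filter_upwards with θ
          gcongr
          exact h1 θ
    _ = 1 := hconst

lemma transfer_int :
    ∫ θ : Fin 2 → ℝ in Set.univ.pi (fun _ => Set.Ico (0:ℝ) (2*Real.pi)),
      u (θ 0, θ 1) / (2*Real.pi)^2 = -1 := by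
  have he := MeasurableEquiv.measurableEmbedding (MeasurableEquiv.piFinTwo (fun _ : Fin 2 => ℝ))
  have hmp := volume_preserving_piFinTwo (fun _ : Fin 2 => ℝ)
  have hpre : Set.univ.pi (fun _ : Fin 2 => Set.Ico (0:ℝ) (2*Real.pi))
      = (MeasurableEquiv.piFinTwo (fun _ : Fin 2 => ℝ)) ⁻¹'
        ((Set.Ico (0:ℝ) (2*Real.pi)) ×ˢ (Set.Ico (0:ℝ) (2*Real.pi))) := by
    ext x
    simp [MeasurableEquiv.piFinTwo_apply, Fin.forall_fin_two, Set.mem_prod]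
  rw [hpre]
  have := hmp.setIntegral_preimage_emb he (fun p : ℝ × ℝ => u p / (2*Real.pi)^2)
    ((Set.Ico (0:ℝ) (2*Real.pi)) ×ˢ (Set.Ico (0:ℝ) (2*Real.pi)))
  rw [show (fun x : Fin 2 → ℝ => u (x 0, x 1) / (2*Real.pi)^2)
      = fun x : Fin 2 → ℝ => u ((MeasurableEquiv.piFinTwo (fun _ : Fin 2 => ℝ)) x) / (2*Real.pi)^2
    from rfl] at *
  rw [this]
  rw [integral_div, double_int]
  have hπ : (0:ℝ) < 2*Real.pi := by positivity
  field_simp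
end GlueTest

open CompositionOuterAux

/-- The composition operator `(Tf)(z) = f((1+z)/2, (1+z)/2)` from `H²(𝔻²)` to
`H^q(𝔻)` (for `0 < q < 1/2`) sends the outer function
`f(z₁,z₂) = exp((z₁+z₂+2)/(z₁+z₂−2))` to `g(z) = exp((z+3)/(z−1))`, which belongs
to `H^q(𝔻)`, has modulus at most `1` on `𝔻`, yet is not outer. -/
theorem composition_outer_not_preserved
    (q : ℝ) (hq0 : 0 < q) (hq : q < 1 / 2)
    (f : (Fin 2 → ℂ) → ℂ)
    (hf : f = fun z => Complex.exp ((z 0 + z 1 + 2) / (z 0 + z 1 - 2)))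
    (g : (Fin 1 → ℂ) → ℂ)
    (hg : g = fun z => Complex.exp ((z 0 + 3) / (z 0 - 1))) :
    -- T sends f to g
    (∀ z : Fin 1 → ℂ, g z = f (fun _ => (1 + z 0) / 2)) ∧
    -- f is outer in H²(𝔻²)
    MemHardy 2 2 f ∧
    Real.log ‖f (fun _ => 0)‖ =
      (∫ θ : Fin 2 → ℝ in Set.univ.pi (fun _ => Set.Ico (0 : ℝ) (2 * Real.pi)),
        Real.log ‖f (fun i => Complex.exp (Complex.I * θ i))‖ / (2 * Real.pi) ^ 2) ∧
    -- g belongs to H^q(𝔻) and has modulus at most 1 on 𝔻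
    MemHardy q 1 g ∧
    (∀ z : Fin 1 → ℂ, ‖z 0‖ < 1 → ‖g z‖ ≤ 1) ∧
    -- but g is not outer
    Real.log ‖g (fun _ => 0)‖ ≠
      (∫ θ : ℝ in Set.Ico (0 : ℝ) (2 * Real.pi),
        Real.log ‖g (fun _ => Complex.exp (Complex.I * θ))‖ / (2 * Real.pi)) := by
  subst hf hg
  have hπ : (0:ℝ) < 2*Real.pi := by positivity
  refine ⟨?_, ⟨?_, ?_⟩, ?_, ⟨?_, ?_⟩, ?_, ?_⟩
  -- Part 1 : T sends f to g
  · intro z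
    simp only
    congr 1
    congr 1 <;> ring
  -- Part 2a : f differentiable on polydisc
  · intro z hz
    have hz0 : ‖z 0‖ < 1 := hz 0
    have hz1 : ‖z 1‖ < 1 := hz 1
    have hne : z 0 + z 1 - 2 ≠ 0 := by
      intro h
      have he : z 0 + z 1 = 2 := by linear_combination h
      have h2 : ‖z 0 + z 1‖ = 2 := by rw [he]; norm_num
      have := norm_add_le (z 0) (z 1)
      rw [h2] at this; linarith
    apply DifferentiableAt.differentiableWithinAt
    have d0 : DifferentiableAt ℂ (fun z : Fin 2 → ℂ => z 0) z :=
      (ContinuousLinearMap.proj (R := ℂ) (φ := fun _ : Fin 2 => ℂ) 0).differentiableAt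
    have d1 : DifferentiableAt ℂ (fun z : Fin 2 → ℂ => z 1) z :=
      (ContinuousLinearMap.proj (R := ℂ) (φ := fun _ : Fin 2 => ℂ) 1).differentiableAt
    apply DifferentiableAt.cexp
    simp only [div_eq_mul_inv]
    exact ((d0.add d1).add_const 2).mul (((d0.add d1).sub_const 2).inv hne)
  -- Part 2b : bound
  · refine ⟨1, fun r hr => ?_⟩
    unfold hardyMean
    have hr0 : 0 ≤ r := hr.1
    have hr1 : r < 1 := hr.2
    apply integral_bound 2
    · intro θ; exact Real.rpow_nonneg (norm_nonneg _) _
    · intro θ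
      apply Real.rpow_le_one (norm_nonneg _) _ (by norm_num)
      simp only
      apply norm_f_le
      set w : ℂ := (fun i : Fin 2 => (r:ℂ) * Complex.exp (Complex.I * (θ i))) 0
          + (fun i : Fin 2 => (r:ℂ) * Complex.exp (Complex.I * (θ i))) 1 with hw
      have hnw : ‖w‖ ≤ 2 := by
        rw [hw]
        calc ‖_ + _‖ ≤ ‖(r:ℂ) * Complex.exp (Complex.I * (θ 0))‖
            + ‖(r:ℂ) * Complex.exp (Complex.I * (θ 1))‖ := norm_add_le _ _
          _ ≤ 2 := by
            rw [norm_mul, norm_mul, norm_exp_I, norm_exp_I]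
            simp [Complex.norm_real, Real.norm_eq_abs, abs_of_nonneg hr0]
            linarith
      have := Complex.sq_norm w
      nlinarith [norm_nonneg w]
  -- Part 3 : f outer
  · have hL : Real.log ‖Complex.exp ((((fun _ : Fin 2 => (0:ℂ)) 0) + ((fun _ : Fin 2 => (0:ℂ)) 1) + 2)
        / (((fun _ : Fin 2 => (0:ℂ)) 0) + ((fun _ : Fin 2 => (0:ℂ)) 1) - 2))‖ = -1 := by
      rw [log_norm_exp]
      norm_num
    simp only at hL ⊢
    rw [hL]
    have heq : (fun θ : Fin 2 → ℝ =>
        Real.log ‖Complex.exp ((Complex.exp (Complex.I * (θ 0)) + Complex.exp (Complex.I * (θ 1)) + 2)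
          / (Complex.exp (Complex.I * (θ 0)) + Complex.exp (Complex.I * (θ 1)) - 2))‖ / (2*Real.pi)^2)
        = fun θ : Fin 2 → ℝ => u (θ 0, θ 1) / (2*Real.pi)^2 := by
      funext θ
      rw [log_norm_exp]
      rfl
    rw [heq, transfer_int]
  -- Part 4a : g differentiable
  · intro z hz
    have hz0 : ‖z 0‖ < 1 := hz 0
    have hne : z 0 - 1 ≠ 0 := by
      intro h
      have he : z 0 = 1 := by linear_combination h
      rw [he] at hz0; norm_num at hz0
    apply DifferentiableAt.differentiableWithinAt
    have d0 : DifferentiableAt ℂ (fun z : Fin 1 → ℂ => z 0) z :=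
      (ContinuousLinearMap.proj (R := ℂ) (φ := fun _ : Fin 1 => ℂ) 0).differentiableAt
    apply DifferentiableAt.cexp
    simp only [div_eq_mul_inv]
    exact (d0.add_const 3).mul ((d0.sub_const 1).inv hne)
  -- Part 4b : bound
  · refine ⟨1, fun r hr => ?_⟩
    unfold hardyMean
    apply integral_bound 1
    · intro θ; exact Real.rpow_nonneg (norm_nonneg _) _
    · intro θ
      apply Real.rpow_le_one (norm_nonneg _) _ (le_of_lt hq0)
      simp only
      apply norm_g_le
      rw [norm_mul, norm_exp_I]
      simp [Complex.norm_real, Real.norm_eq_abs, abs_of_nonneg hr.1]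
      linarith [hr.2]
  -- Part 5 : modulus bound
  · intro z hz
    simp only
    exact norm_g_le (le_of_lt hz)
  -- Part 6 : g not outer
  · have hL : Real.log ‖Complex.exp ((((fun _ : Fin 1 => (0:ℂ)) 0) + 3)
        / (((fun _ : Fin 1 => (0:ℂ)) 0) - 1))‖ = -3 := by
      rw [log_norm_exp]
      norm_num
    simp only at hL ⊢
    rw [hL]
    have hR : ∫ θ in Set.Ico (0:ℝ) (2*Real.pi),
        Real.log ‖Complex.exp ((Complex.exp (Complex.I * θ) + 3)
          / (Complex.exp (Complex.I * θ) - 1))‖ / (2*Real.pi) = -1 := by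
      have h0 : ∀ᵐ θ : ℝ ∂(volume.restrict (Set.Ico (0:ℝ) (2*Real.pi))), θ ≠ 0 := by
        refine ae_restrict_of_ae ?_
        simp only [MeasureTheory.ae_iff, not_not]
        have h : {a : ℝ | a = 0} = {0} := by ext; simp
        rw [h]; exact Real.volume_singleton
      have hcong : ∀ᵐ θ : ℝ ∂(volume.restrict (Set.Ico (0:ℝ) (2*Real.pi))),
          Real.log ‖Complex.exp ((Complex.exp (Complex.I * θ) + 3)
            / (Complex.exp (Complex.I * θ) - 1))‖ / (2*Real.pi) = (-1) / (2*Real.pi) := by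
        filter_upwards [h0, ae_restrict_mem measurableSet_Ico] with θ hθ0 hθm
        have h1 : 0 < θ := lt_of_le_of_ne hθm.1 (Ne.symm hθ0)
        rw [log_norm_exp, re_g_eq (norm_exp_I θ) (exp_ne_one h1 hθm.2)]
      rw [integral_congr_ae hcong, setIntegral_const, measureReal_def, Real.volume_Ico]
      rw [smul_eq_mul, ENNReal.toReal_ofReal (by linarith)]
      field_simp
      ring
    rw [hR]
    norm_num
end
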